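/- arXiv:1205.6006 — 5 statements merged into one kernel-verified Lean document; each statement's English description precedes it below -/
import Mathlib

section
/- Let r ≥ 1, let S be a finite set, and suppose that to each s ∈ S is assigned a nonzero vector α(s) ∈ ℕ^r. Then in the formal power series ring ℤ[[t, z_1, …, z_r]], writing z^v = z_1^{v_1}⋯z_r^{v_r} for v ∈ ℕ^r, one has ∏_{s∈S} (1 − t·z^{α(s)})·(1 − z^{α(s)})^{-1} = Σ_{c : S → ℕ} (1 − t)^{#{s ∈ S : c(s) ≠ 0}} · z^{Σ_{s∈S} c(s)·α(s)}, where the right-hand side is a well-defined formal power series because each α(s) is nonzero (so only finitely many functions c contribute to any fixed monomial). -/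
open MvPowerSeries

/-- The variable `t` in `ℤ[[t, z_1, …, z_r]]`. -/
noncomputable def tvar (r : ℕ) : MvPowerSeries (Option (Fin r)) ℤ :=
  MvPowerSeries.X none

/-- The monomial `z^v = z_1^{v 1} ⋯ z_r^{v r}` in `ℤ[[t, z_1, …, z_r]]`. -/
noncomputable def zmon (r : ℕ) (v : Fin r → ℕ) : MvPowerSeries (Option (Fin r)) ℤ :=
  MvPowerSeries.monomial (Finsupp.equivFunOnFinite.symm fun o => Option.elim o 0 v) 1

variable {r : ℕ}

noncomputable def iv (r : ℕ) (v : Fin r → ℕ) : Option (Fin r) →₀ ℕ :=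
  Finsupp.equivFunOnFinite.symm fun o => Option.elim o 0 v

lemma iv_none (v : Fin r → ℕ) : iv r v none = 0 := rfl
lemma iv_some (v : Fin r → ℕ) (i : Fin r) : iv r v (some i) = v i := rfl
lemma zmon_eq (v : Fin r → ℕ) : zmon r v = MvPowerSeries.monomial (iv r v) 1 := rfl

lemma iv_add (v w : Fin r → ℕ) : iv r (v + w) = iv r v + iv r w := by
  ext o; cases o <;> simp [iv_none, iv_some, iv]

lemma iv_zero : iv r 0 = 0 := by
  ext o; cases o <;> simp [iv]

lemma iv_eq_zero {v : Fin r → ℕ} (h : iv r v = 0) : v = 0 := by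
  funext i
  have := DFunLike.congr_fun h (some i)
  simpa [iv_some] using this

lemma zmon_mul (v w : Fin r → ℕ) : zmon r v * zmon r w = zmon r (v + w) := by
  rw [zmon_eq, zmon_eq, zmon_eq, MvPowerSeries.monomial_mul_monomial, iv_add, one_mul]


lemma coeff_onet_pow (k : ℕ) (d : Option (Fin r) →₀ ℕ) (i : Fin r) (hd : d (some i) ≠ 0) :
    MvPowerSeries.coeff d ((1 - tvar r) ^ k) = 0 := by
  induction k generalizing d with
  | zero =>
    rw [pow_zero, MvPowerSeries.coeff_one, if_neg]
    intro h; subst h; simp at hd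
  | succ k ih =>
    rw [pow_succ, MvPowerSeries.coeff_mul]
    apply Finset.sum_eq_zero
    rintro ⟨p1, p2⟩ hp
    rw [Finset.HasAntidiagonal.mem_antidiagonal] at hp
    by_cases h1 : p1 (some i) ≠ 0
    · rw [ih _ h1, zero_mul]
    · push_neg at h1
      have h2 : p2 (some i) ≠ 0 := by
        have := DFunLike.congr_fun hp (some i)
        simp only [Finsupp.add_apply, h1, zero_add] at this
        rwa [this]
      have hz : MvPowerSeries.coeff p2 (1 - tvar r) = 0 := by
        rw [map_sub, MvPowerSeries.coeff_one, if_neg, tvar, MvPowerSeries.X,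
          MvPowerSeries.coeff_monomial, if_neg, sub_zero]
        · intro h; rw [h] at h2
          simp [Finsupp.single_apply] at h2
        · intro h; subst h; simp at h2
      rw [hz, mul_zero]

lemma coeff_factor_ne {k : ℕ} {v : Fin r → ℕ} {d : Option (Fin r) →₀ ℕ}
    (h : MvPowerSeries.coeff d ((1 - tvar r) ^ k * zmon r v) ≠ 0) (i : Fin r) :
    d (some i) = v i := by
  rw [zmon_eq, MvPowerSeries.coeff_mul_monomial] at h
  split_ifs at h with hle
  · rw [mul_one] at h
    have hz : (d - iv r v) (some i) = 0 := by
      by_contra hne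
      exact h (coeff_onet_pow k _ i hne)
    have hle' : iv r v (some i) ≤ d (some i) := Finsupp.le_def.mp hle (some i)
    rw [Finsupp.tsub_apply] at hz
    rw [iv_some] at hz hle'
    omega
  · exact absurd rfl h

lemma degBound (e : Option (Fin r) →₀ ℕ) (x : Option (Fin r)) :
    e x ≤ e.sum fun _ n => n := by
  by_cases hx : x ∈ e.support
  · exact Finset.single_le_sum (fun _ _ => Nat.zero_le _) hx
  · simp [Finsupp.notMem_support_iff.mp hx]

noncomputable def kterm (r : ℕ) {S : Type} [Fintype S] (α : S → Fin r → ℕ) (c : S → ℕ) :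
    MvPowerSeries (Option (Fin r)) ℤ :=
  (1 - tvar r) ^ (Finset.univ.filter fun s => c s ≠ 0).card * zmon r (∑ s, c s • α s)

lemma kterm_bound {S : Type} [Fintype S] {α : S → Fin r → ℕ} (hα : ∀ s, α s ≠ 0)
    (c : S → ℕ) {d e : Option (Fin r) →₀ ℕ} (hde : ∀ x, d x ≤ e x)
    (h : MvPowerSeries.coeff d (kterm r α c) ≠ 0) (s : S) :
    c s ≤ e.sum fun _ n => n := by
  obtain ⟨i, hi⟩ := Function.ne_iff.mp (hα s)
  have h1 : d (some i) = (∑ s', c s' • α s') i := coeff_factor_ne h i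
  have h2 : (∑ s', c s' • α s') i = ∑ s', c s' * α s' i := by
    rw [Finset.sum_apply]
    simp [Pi.smul_apply, smul_eq_mul]
  have h3 : c s * α s i ≤ ∑ s', c s' * α s' i :=
    Finset.single_le_sum (f := fun s' => c s' * α s' i) (fun _ _ => Nat.zero_le _)
      (Finset.mem_univ s)
  have h4 : c s ≤ c s * α s i := Nat.le_mul_of_pos_right _ (Nat.pos_of_ne_zero (by simpa using hi))
  calc c s ≤ c s * α s i := h4
    _ ≤ ∑ s', c s' * α s' i := h3
    _ = d (some i) := by rw [h1, h2]
    _ ≤ e (some i) := hde _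
    _ ≤ e.sum fun _ n => n := degBound e _

noncomputable def tn (α₀ : Fin r → ℕ) (n : ℕ) : MvPowerSeries (Option (Fin r)) ℤ :=
  (1 - tvar r) ^ (if n = 0 then 0 else 1) * zmon r (n • α₀)

lemma tn_bound {α₀ : Fin r → ℕ} (hα₀ : α₀ ≠ 0) (n : ℕ) {d e : Option (Fin r) →₀ ℕ}
    (hde : ∀ x, d x ≤ e x) (h : MvPowerSeries.coeff d (tn α₀ n) ≠ 0) :
    n ≤ e.sum fun _ n => n := by
  obtain ⟨i, hi⟩ := Function.ne_iff.mp hα₀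
  have h1 : d (some i) = (n • α₀) i := coeff_factor_ne h i
  have h4 : n ≤ n * α₀ i := Nat.le_mul_of_pos_right _ (Nat.pos_of_ne_zero (by simpa using hi))
  calc n ≤ n * α₀ i := h4
    _ = d (some i) := by rw [h1]; simp [Pi.smul_apply, smul_eq_mul]
    _ ≤ e (some i) := hde _
    _ ≤ e.sum fun _ n => n := degBound e _

lemma tn_zero (α₀ : Fin r → ℕ) : tn α₀ 0 = 1 := by
  rw [tn, if_pos rfl, pow_zero, one_mul, zero_smul, zmon_eq, iv_zero,
    MvPowerSeries.monomial_zero_one]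

lemma zmul_tn (α₀ : Fin r → ℕ) (n : ℕ) (hn : n ≠ 0) :
    zmon r α₀ * tn α₀ n = tn α₀ (n + 1) := by
  simp only [tn, if_neg hn, if_neg (Nat.succ_ne_zero n)]
  rw [mul_left_comm, zmon_mul]
  congr 2
  rw [succ_nsmul, add_comm]

lemma constCoeff_zmon {α₀ : Fin r → ℕ} (hα₀ : α₀ ≠ 0) :
    MvPowerSeries.constantCoeff (zmon r α₀) = 0 := by
  rw [← MvPowerSeries.coeff_zero_eq_constantCoeff_apply, zmon_eq,
    MvPowerSeries.coeff_monomial, if_neg]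
  intro h
  exact hα₀ (iv_eq_zero h.symm)

lemma Hser {α₀ : Fin r → ℕ} (hα₀ : α₀ ≠ 0) :
    (1 - tvar r * zmon r α₀) * MvPowerSeries.invOfUnit (1 - zmon r α₀) 1
      = (fun e => ∑' n : ℕ, MvPowerSeries.coeff e (tn α₀ n) :
          MvPowerSeries (Option (Fin r)) ℤ) := by
  set G₁ : MvPowerSeries (Option (Fin r)) ℤ :=
    (fun e => ∑' n : ℕ, MvPowerSeries.coeff e (tn α₀ n)) with hG
  have hc : MvPowerSeries.constantCoeff (1 - zmon r α₀) = ((1 : ℤˣ) : ℤ) := by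
    rw [map_sub, map_one, constCoeff_zmon hα₀, sub_zero, Units.val_one]
  have hinv : (1 - zmon r α₀) * MvPowerSeries.invOfUnit (1 - zmon r α₀) 1 = 1 :=
    MvPowerSeries.mul_invOfUnit _ _ hc
  have hG₁ : ∀ e, MvPowerSeries.coeff e G₁ = ∑' n : ℕ, MvPowerSeries.coeff e (tn α₀ n) :=
    fun e => rfl
  have hmain : (1 - zmon r α₀) * G₁ = 1 - tvar r * zmon r α₀ := by
    ext e
    set N := e.sum fun _ n => n with hN
    have hee : ∀ x, e x ≤ e x := fun _ => le_rfl
    have S1 : Summable fun n => MvPowerSeries.coeff e (tn α₀ n) := by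
      apply summable_of_ne_finset_zero (s := Finset.range (N + 1))
      intro n hn
      by_contra hne
      exact hn (Finset.mem_range.mpr (Nat.lt_succ_of_le (tn_bound hα₀ n hee hne)))
    have S3 : Summable fun n => MvPowerSeries.coeff e (tn α₀ (n + 1)) := by
      apply summable_of_ne_finset_zero (s := Finset.range (N + 1))
      intro n hn
      by_contra hne
      exact hn (Finset.mem_range.mpr (Nat.lt_succ_of_le (le_trans (Nat.le_succ n)
        (tn_bound hα₀ (n+1) hee hne))))
    have S2 : Summable fun n => MvPowerSeries.coeff e (zmon r α₀ * tn α₀ n) := by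
      apply summable_of_ne_finset_zero (s := Finset.range (N + 1))
      intro n hn
      by_contra hne
      apply hn
      rw [zmon_eq, MvPowerSeries.coeff_monomial_mul] at hne
      split_ifs at hne with hle
      · rw [one_mul] at hne
        have hde : ∀ x, (e - iv r α₀) x ≤ e x := fun x => by
          rw [Finsupp.tsub_apply]; omega
        exact Finset.mem_range.mpr (Nat.lt_succ_of_le (tn_bound hα₀ n hde hne))
      · exact absurd rfl hne
    have h1 : MvPowerSeries.coeff e (zmon r α₀ * G₁)
        = ∑' n : ℕ, MvPowerSeries.coeff e (zmon r α₀ * tn α₀ n) := by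
      have hterm : ∀ n : ℕ, MvPowerSeries.coeff e (zmon r α₀ * tn α₀ n)
          = if iv r α₀ ≤ e then MvPowerSeries.coeff (e - iv r α₀) (tn α₀ n) else 0 := by
        intro n
        rw [zmon_eq, MvPowerSeries.coeff_monomial_mul]
        split_ifs with h
        · rw [one_mul]
        · rfl
      rw [tsum_congr hterm, zmon_eq, MvPowerSeries.coeff_monomial_mul]
      split_ifs with h
      · rw [one_mul, hG₁]
      · exact tsum_zero.symm
    calc MvPowerSeries.coeff e ((1 - zmon r α₀) * G₁)
        = MvPowerSeries.coeff e G₁ - MvPowerSeries.coeff e (zmon r α₀ * G₁) := by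
          rw [sub_mul, one_mul, map_sub]
      _ = (MvPowerSeries.coeff e (tn α₀ 0)
            + ∑' n : ℕ, MvPowerSeries.coeff e (tn α₀ (n + 1)))
          - ∑' n : ℕ, MvPowerSeries.coeff e (zmon r α₀ * tn α₀ n) := by
          rw [hG₁, h1, S1.tsum_eq_zero_add]
      _ = MvPowerSeries.coeff e (tn α₀ 0)
          + ∑' n : ℕ, (MvPowerSeries.coeff e (tn α₀ (n + 1))
              - MvPowerSeries.coeff e (zmon r α₀ * tn α₀ n)) := by
          rw [S3.tsum_sub S2]; ring
      _ = MvPowerSeries.coeff e (tn α₀ 0)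
          + (MvPowerSeries.coeff e (tn α₀ 1)
              - MvPowerSeries.coeff e (zmon r α₀ * tn α₀ 0)) := by
          congr 1
          apply tsum_eq_single 0
          intro n hn
          rw [zmul_tn α₀ n hn, sub_self]
      _ = MvPowerSeries.coeff e (1 - tvar r * zmon r α₀) := by
          rw [tn_zero, mul_one]
          have ht1 : tn α₀ 1 = (1 - tvar r) * zmon r α₀ := by
            rw [tn, if_neg one_ne_zero, pow_one, one_smul]
          rw [ht1, ← map_sub, ← map_add]
          congr 1
          ring
  calc (1 - tvar r * zmon r α₀) * MvPowerSeries.invOfUnit (1 - zmon r α₀) 1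
      = ((1 - zmon r α₀) * G₁) * MvPowerSeries.invOfUnit (1 - zmon r α₀) 1 := by rw [hmain]
    _ = G₁ * ((1 - zmon r α₀) * MvPowerSeries.invOfUnit (1 - zmon r α₀) 1) := by ring
    _ = G₁ := by rw [hinv, mul_one]

lemma tn_mul_kterm {S : Type} [Fintype S] (α : Option S → Fin r → ℕ) (n : ℕ) (c : S → ℕ) :
    tn (α none) n * kterm r (fun s => α (some s)) c
      = kterm r α (fun o => Option.elim o n c) := by
  have hcard : (Finset.univ.filter fun o : Option S => (Option.elim o n c) ≠ 0).card
      = (if n = 0 then 0 else 1)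
        + (Finset.univ.filter fun s : S => c s ≠ 0).card := by
    rw [Finset.card_filter, Finset.card_filter, Fintype.sum_option]
    congr 1
    by_cases hn : n = 0 <;> simp [hn]
  have hvec : (∑ o : Option S, (Option.elim o n c) • α o)
      = n • α none + ∑ s : S, c s • α (some s) := by
    rw [Fintype.sum_option]
    rfl
  rw [kterm, kterm, tn, hcard, hvec, pow_add, ← zmon_mul, mul_mul_mul_comm]

def KP (r : ℕ) (S : Type) : Prop :=
  ∀ [Fintype S] (α : S → Fin r → ℕ), (∀ s, α s ≠ 0) →
    ∀ e : Option (Fin r) →₀ ℕ,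
      MvPowerSeries.coeff e (∏ s : S, (1 - tvar r * zmon r (α s)) *
        MvPowerSeries.invOfUnit (1 - zmon r (α s)) 1)
      = ∑' c : S → ℕ, MvPowerSeries.coeff e (kterm r α c)

lemma KP_pempty (r : ℕ) : KP r PEmpty := by
  intro inst α hα e
  have huniv : (Finset.univ : Finset PEmpty) = ∅ := Finset.univ_eq_empty
  rw [huniv, Finset.prod_empty]
  have hk : kterm r α default = 1 := by
    rw [kterm, huniv, Finset.filter_empty, Finset.card_empty, pow_zero,
      Finset.sum_empty, one_mul, zmon_eq, iv_zero, MvPowerSeries.monomial_zero_one]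
  rw [tsum_eq_single (default : PEmpty → ℕ)
    (fun c' hc' => absurd (Subsingleton.elim c' default) hc'), hk]

lemma KP_equiv {S S' : Type} (eqv : S ≃ S') (hP : KP r S) : KP r S' := by
  intro inst' α' hα' e
  letI instS : Fintype S := Fintype.ofEquiv S' eqv.symm
  have h := hP (α' ∘ eqv) (fun s => hα' (eqv s)) e
  have hprod : (∏ s : S, (1 - tvar r * zmon r (α' (eqv s))) *
        MvPowerSeries.invOfUnit (1 - zmon r (α' (eqv s))) 1)
      = ∏ s' : S', (1 - tvar r * zmon r (α' s')) *
        MvPowerSeries.invOfUnit (1 - zmon r (α' s')) 1 :=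
    Equiv.prod_comp eqv (fun s' => (1 - tvar r * zmon r (α' s')) *
      MvPowerSeries.invOfUnit (1 - zmon r (α' s')) 1)
  let ce : (S' → ℕ) ≃ (S → ℕ) :=
    ⟨fun c => c ∘ eqv, fun c => c ∘ eqv.symm,
     fun c => funext fun s' => by simp,
     fun c => funext fun s => by simp⟩
  have hk : ∀ c' : S' → ℕ, kterm r (α' ∘ eqv) (ce c') = kterm r α' c' := by
    intro c'
    rw [kterm, kterm]
    have h1 : (Finset.univ.filter fun s : S => ce c' s ≠ 0).card
        = (Finset.univ.filter fun s' : S' => c' s' ≠ 0).card := by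
      rw [Finset.card_filter, Finset.card_filter]
      exact Fintype.sum_equiv eqv _ _ (fun s => rfl)
    have h2 : (∑ s : S, ce c' s • (α' ∘ eqv) s) = ∑ s' : S', c' s' • α' s' :=
      Fintype.sum_equiv eqv _ _ (fun s => rfl)
    rw [h1, h2]
  have htsum : (∑' c : S → ℕ, MvPowerSeries.coeff e (kterm r (α' ∘ eqv) c))
      = ∑' c' : S' → ℕ, MvPowerSeries.coeff e (kterm r α' c') := by
    rw [← ce.tsum_eq (fun c : S → ℕ => MvPowerSeries.coeff e (kterm r (α' ∘ eqv) c))]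
    exact tsum_congr fun c' => by rw [hk c']
  calc MvPowerSeries.coeff e (∏ s' : S', (1 - tvar r * zmon r (α' s')) *
        MvPowerSeries.invOfUnit (1 - zmon r (α' s')) 1)
      = MvPowerSeries.coeff e (∏ s : S, (1 - tvar r * zmon r (α' (eqv s))) *
        MvPowerSeries.invOfUnit (1 - zmon r (α' (eqv s))) 1) := by rw [hprod]
    _ = ∑' c : S → ℕ, MvPowerSeries.coeff e (kterm r (α' ∘ eqv) c) := h
    _ = ∑' c' : S' → ℕ, MvPowerSeries.coeff e (kterm r α' c') := htsum

def pe (S : Type) : ℕ × (S → ℕ) ≃ (Option S → ℕ) where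
  toFun p := fun o => Option.elim o p.1 p.2
  invFun c := (c none, fun s => c (some s))
  left_inv p := rfl
  right_inv c := funext fun o => by cases o <;> rfl

lemma KP_option {S : Type} [Fintype S] (hP : KP r S) : KP r (Option S) := by
  intro instO α hα e
  obtain rfl := Subsingleton.elim instO (@instFintypeOption S _)
  letI : DecidableEq S := Classical.decEq S
  set N := e.sum fun _ n => n with hN
  have hee : ∀ x, e x ≤ e x := fun _ => le_rfl
  have hα₀ : α none ≠ 0 := hα none
  set αS : S → Fin r → ℕ := fun s => α (some s) with hαS
  have hαS' : ∀ s, αS s ≠ 0 := fun s => hα (some s)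
  have hprod : (∏ o : Option S, (1 - tvar r * zmon r (α o)) *
        MvPowerSeries.invOfUnit (1 - zmon r (α o)) 1)
      = ((1 - tvar r * zmon r (α none)) * MvPowerSeries.invOfUnit (1 - zmon r (α none)) 1)
        * ∏ s : S, (1 - tvar r * zmon r (αS s)) *
          MvPowerSeries.invOfUnit (1 - zmon r (αS s)) 1 :=
    Fintype.prod_option _
  rw [hprod, MvPowerSeries.coeff_mul]
  have hA : ∀ d, MvPowerSeries.coeff d
      ((1 - tvar r * zmon r (α none)) * MvPowerSeries.invOfUnit (1 - zmon r (α none)) 1)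
      = ∑' n : ℕ, MvPowerSeries.coeff d (tn (α none) n) := by
    intro d
    exact (congrArg (MvPowerSeries.coeff d) (Hser hα₀)).trans rfl
  have hB : ∀ d, MvPowerSeries.coeff d (∏ s : S, (1 - tvar r * zmon r (αS s)) *
        MvPowerSeries.invOfUnit (1 - zmon r (αS s)) 1)
      = ∑' c : S → ℕ, MvPowerSeries.coeff d (kterm r αS c) :=
    fun d => hP αS hαS' d
  have key1 : ∀ p ∈ Finset.HasAntidiagonal.antidiagonal e,
      MvPowerSeries.coeff p.1
        ((1 - tvar r * zmon r (α none)) * MvPowerSeries.invOfUnit (1 - zmon r (α none)) 1)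
      * MvPowerSeries.coeff p.2 (∏ s : S, (1 - tvar r * zmon r (αS s)) *
          MvPowerSeries.invOfUnit (1 - zmon r (αS s)) 1)
      = ∑ n ∈ Finset.range (N + 1), ∑ c ∈ Fintype.piFinset (fun _ : S => Finset.range (N + 1)),
          MvPowerSeries.coeff p.1 (tn (α none) n) * MvPowerSeries.coeff p.2 (kterm r αS c) := by
    intro p hp
    rw [Finset.HasAntidiagonal.mem_antidiagonal] at hp
    have hp1 : ∀ x, p.1 x ≤ e x := fun x => by
      have := DFunLike.congr_fun hp x
      rw [Finsupp.add_apply] at this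
      omega
    have hp2 : ∀ x, p.2 x ≤ e x := fun x => by
      have := DFunLike.congr_fun hp x
      rw [Finsupp.add_apply] at this
      omega
    rw [hA p.1, hB p.2,
      tsum_eq_sum (s := Finset.range (N + 1)) (f := fun n => MvPowerSeries.coeff p.1 (tn (α none) n))
        (fun n hn => by
          by_contra h
          exact hn (Finset.mem_range.mpr (Nat.lt_succ_of_le (tn_bound hα₀ n hp1 h)))),
      tsum_eq_sum (s := Fintype.piFinset (fun _ : S => Finset.range (N + 1)))
        (f := fun c => MvPowerSeries.coeff p.2 (kterm r αS c))
        (fun c hc => by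
          by_contra h
          exact hc (Fintype.mem_piFinset.mpr (fun s =>
            Finset.mem_range.mpr (Nat.lt_succ_of_le (kterm_bound hαS' c hp2 h s))))),
      Finset.sum_mul_sum]
  rw [Finset.sum_congr rfl key1, Finset.sum_comm]
  have key2 : ∀ n ∈ Finset.range (N + 1),
      (∑ p ∈ Finset.HasAntidiagonal.antidiagonal e, ∑ c ∈ Fintype.piFinset (fun _ : S => Finset.range (N + 1)),
        MvPowerSeries.coeff p.1 (tn (α none) n) * MvPowerSeries.coeff p.2 (kterm r αS c))
      = ∑ c ∈ Fintype.piFinset (fun _ : S => Finset.range (N + 1)),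
          MvPowerSeries.coeff e (kterm r α (fun o => Option.elim o n c)) := by
    intro n _
    rw [Finset.sum_comm]
    refine Finset.sum_congr rfl fun c _ => ?_
    rw [← MvPowerSeries.coeff_mul, tn_mul_kterm α n c]
  rw [Finset.sum_congr rfl key2]
  have hsupp : ∀ p : ℕ × (S → ℕ), p ∉ Finset.range (N + 1) ×ˢ Fintype.piFinset (fun _ : S => Finset.range (N + 1)) →
      MvPowerSeries.coeff e (kterm r α (pe S p)) = 0 := by
    intro p hp
    by_contra h
    apply hp
    rw [Finset.mem_product]
    constructor
    · exact Finset.mem_range.mpr (Nat.lt_succ_of_le (kterm_bound hα (pe S p) hee h none))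
    · exact Fintype.mem_piFinset.mpr (fun s =>
        Finset.mem_range.mpr (Nat.lt_succ_of_le (kterm_bound hα (pe S p) hee h (some s))))
  calc (∑ n ∈ Finset.range (N + 1), ∑ c ∈ Fintype.piFinset (fun _ : S => Finset.range (N + 1)),
        MvPowerSeries.coeff e (kterm r α (fun o => Option.elim o n c)))
      = ∑ p ∈ Finset.range (N + 1) ×ˢ Fintype.piFinset (fun _ : S => Finset.range (N + 1)),
          MvPowerSeries.coeff e (kterm r α (pe S p)) := by
        rw [Finset.sum_product]
        rfl
    _ = ∑' p : ℕ × (S → ℕ), MvPowerSeries.coeff e (kterm r α (pe S p)) :=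
        (tsum_eq_sum hsupp).symm
    _ = ∑' c : Option S → ℕ, MvPowerSeries.coeff e (kterm r α c) :=
        Equiv.tsum_eq (pe S) (fun c => MvPowerSeries.coeff e (kterm r α c))

/-- the Gindikin–Karpelevich sum over Kostant partitions, stated
coefficientwise in `ℤ[[t, z_1, …, z_r]]`. -/
theorem stmt0 (r : ℕ) (hr : 1 ≤ r) (S : Type) [Fintype S]
    (α : S → (Fin r → ℕ)) (hα : ∀ s, α s ≠ 0) :
    ∀ e : Option (Fin r) →₀ ℕ,
      MvPowerSeries.coeff e
        (∏ s : S, (1 - tvar r * zmon r (α s)) *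
          MvPowerSeries.invOfUnit (1 - zmon r (α s)) 1)
      = ∑' c : S → ℕ,
          MvPowerSeries.coeff e
            ((1 - tvar r) ^ (Finset.univ.filter fun s => c s ≠ 0).card *
              zmon r (∑ s : S, c s • α s)) := by
  intro e
  have h : KP r S :=
    Finite.induction_empty_option (P := KP r)
      (fun eqv hp => KP_equiv eqv hp) (KP_pempty r)
      (fun hp => KP_option hp) S
  exact h α hα e
end

section
/- The map Ξ sending T ∈ 𝒯(∞) to the function on the positive roots of A_r defined by Ξ(T)(β_{i,k}) = ℓ_{i,k+1}(T) for 1 ≤ i ≤ k ≤ r is a bijection from 𝒯(∞) onto the set of all functions from {β_{i,k} : 1 ≤ i ≤ k ≤ r} to the nonnegative integers. Moreover, for every T ∈ 𝒯(∞), seg(T) equals the number of positive roots α with Ξ(T)(α) ≠ 0, and wt(T) = −Σ_α Ξ(T)(α)·α. -/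
/-- Marginally large semistandard Young tableaux of type `A_r`, on the alphabet
`{1 < 2 < ⋯ < r+1}`: exactly `r` rows (given as lists of entries), rows weakly
increasing, columns strictly increasing, first column `1, 2, …, r`, and the
number of `i`-entries in row `i` exceeds the number of boxes in row `i+1` by
exactly one. -/
structure TabA (r : ℕ) where
  row : Fin r → List ℕ
  entry_mem : ∀ i : Fin r, ∀ e ∈ row i, 1 ≤ e ∧ e ≤ r + 1
  row_weak : ∀ i : Fin r, (row i).Chain' (· ≤ ·)
  first_col : ∀ i : Fin r, (row i).head? = some (i.1 + 1)
  col_le : ∀ i : Fin r, ∀ h : i.1 + 1 < r,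
    (row ⟨i.1 + 1, h⟩).length ≤ (row i).length
  col_strict : ∀ i : Fin r, ∀ h : i.1 + 1 < r, ∀ j < (row ⟨i.1 + 1, h⟩).length,
    (row i).getD j 0 < (row ⟨i.1 + 1, h⟩).getD j 0
  marg_large : ∀ i : Fin r, (row i).count (i.1 + 1) =
    (if h : i.1 + 1 < r then (row ⟨i.1 + 1, h⟩).length else 0) + 1

/-- `ℓ_{i,k}(T)`: the number of `k`-entries in row `i` (rows of `T` are indexed by
`Fin r`, row `i : Fin r` having label `i+1`). -/
def ellA (r : ℕ) (T : TabA r) (i : Fin r) (k : ℕ) : ℕ := (T.row i).count k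

/-- `seg(T)`: the number of pairs `(i,k)` with `1 ≤ i < k ≤ r+1` and `ℓ_{i,k}(T) > 0`. -/
def segA (r : ℕ) (T : TabA r) : ℕ :=
  ∑ i : Fin r, ((Finset.Icc (i.1 + 2) (r + 1)).filter fun k => ellA r T i k ≠ 0).card

/-- The positive root `β_{i,k} = α_i + ⋯ + α_k` of `A_r`, as a vector of
coordinates in the simple roots. -/
def betaA (r : ℕ) (i k : ℕ) : Fin r → ℕ :=
  fun j => if i ≤ j.1 + 1 ∧ j.1 + 1 ≤ k then 1 else 0

/-- The set of positive roots `{β_{i,k} : 1 ≤ i ≤ k ≤ r}` of `A_r`. -/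
def posRootsA (r : ℕ) : Finset (Fin r → ℕ) :=
  ((Finset.Icc 1 r ×ˢ Finset.Icc 1 r).filter fun p => p.1 ≤ p.2).image
    fun p => betaA r p.1 p.2

/-- `Ξ(T)`, extended by zero to all vectors: `Ξ(T)(β_{i,k}) = ℓ_{i,k+1}(T)`. -/
def XiA (r : ℕ) (T : TabA r) (v : Fin r → ℕ) : ℕ :=
  ∑ i : Fin r, ∑ k ∈ Finset.Icc (i.1 + 1) r,
    if v = betaA r (i.1 + 1) k then ellA r T i (k + 1) else 0

/-- `-wt(T) = Σ_{1≤i<k≤r+1} ℓ_{i,k}(T)·(α_i + ⋯ + α_{k-1})`, in simple-root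
coordinates. -/
def negwtA (r : ℕ) (T : TabA r) : Fin r → ℕ :=
  ∑ i : Fin r, ∑ k ∈ Finset.Icc (i.1 + 2) (r + 1),
    ellA r T i k • betaA r (i.1 + 1) (k - 1)

/-- `wt(T)` as an integer vector in simple-root coordinates. -/
def wtA (r : ℕ) (T : TabA r) : Fin r → ℤ :=
  fun j => -(negwtA r T j : ℤ)

namespace S1


/-- blocks of equal entries -/
def blocks (s n : ℕ) (c : ℕ → ℕ) : List ℕ :=
  (List.range' s n).flatMap fun k => List.replicate (c k) k

lemma mem_blocks {s n c x} (hx : x ∈ blocks s n c) : s ≤ x ∧ x < s + n := by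
  simp only [blocks, List.mem_flatMap, List.mem_range'_1, List.mem_replicate] at hx
  obtain ⟨k, ⟨h1, h2⟩, _, rfl⟩ := hx
  omega

lemma blocks_pairwise (s n c) : (blocks s n c).Pairwise (· ≤ ·) := by
  induction n generalizing s with
  | zero => simp [blocks]
  | succ n ih =>
    rw [blocks, List.range'_succ, List.flatMap_cons, List.pairwise_append]
    refine ⟨List.pairwise_replicate.2 (by simp), ih (s+1), ?_⟩
    intro a ha b hb
    rw [List.eq_of_mem_replicate ha]
    exact le_of_lt (Nat.lt_of_lt_of_le (Nat.lt_succ_self s) (mem_blocks hb).1)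

lemma blocks_count (s n c k) :
    (blocks s n c).count k = if s ≤ k ∧ k < s + n then c k else 0 := by
  induction n generalizing s with
  | zero => simp [blocks]
  | succ n ih =>
    rw [blocks, List.range'_succ, List.flatMap_cons, List.count_append]
    rw [show (List.range' (s+1) n).flatMap (fun k => List.replicate (c k) k) = blocks (s+1) n c from rfl]
    rw [ih (s+1), List.count_replicate]
    by_cases h : s = k
    · subst h
      rw [if_pos (by simp), if_neg (by omega), if_pos (by omega)]; omega
    · rw [if_neg (by simpa using h), Nat.zero_add]
      exact if_congr (by omega) rfl rfl

lemma blocks_length (s n c) :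
    (blocks s n c).length = ((List.range' s n).map c).sum := by
  rw [blocks, List.length_flatMap]
  congr 1
  simp [Function.comp]

lemma count_eq_zero_ge {l : List ℕ} {a : ℕ} (h : l.Chain' (· ≤ ·))
    (hh : l.head? = some a) {k : ℕ} (hk : k < a) : l.count k = 0 := by
  rw [List.count_eq_zero]
  intro hmem
  have hak : a ≤ k := by
    cases l with
    | nil => simp at hmem
    | cons b t =>
      obtain rfl : b = a := by simpa using hh
      unfold List.Chain' at h; rw [List.isChain_iff_pairwise, List.pairwise_cons] at h
      rcases List.mem_cons.1 hmem with rfl | hm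
      · exact le_refl _
      · exact h.1 _ hm
  omega

lemma eq_of_counts {l₁ l₂ : List ℕ} (h1 : l₁.Chain' (· ≤ ·)) (h2 : l₂.Chain' (· ≤ ·))
    (h : ∀ n, l₁.count n = l₂.count n) : l₁ = l₂ :=
  List.Perm.eq_of_pairwise'
    (List.isChain_iff_pairwise.1 h1) (List.isChain_iff_pairwise.1 h2) (List.perm_iff_count.2 h)

lemma length_eq_sum_counts {l : List ℕ} {s : Finset ℕ} (h : ∀ x ∈ l, x ∈ s) :
    l.length = ∑ k ∈ s, l.count k := by
  classical
  have h1 : ∑ a ∈ l.toFinset, l.count a = l.length := by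
    simpa using Multiset.toFinset_sum_count_eq (l : Multiset ℕ)
  rw [← h1]
  exact Finset.sum_subset (fun x hx => h x (List.mem_toFinset.1 hx))
    (fun x _ hx => List.count_eq_zero.2 fun hm => hx (List.mem_toFinset.2 hm))


end S1

lemma betaA_inj {r i k i' k' : ℕ} (h1 : 1 ≤ i) (h2 : i ≤ k) (h3 : k ≤ r)
    (h1' : 1 ≤ i') (h2' : i' ≤ k') (h3' : k' ≤ r)
    (h : betaA r i k = betaA r i' k') : i = i' ∧ k = k' := by
  have A := congrFun h ⟨i - 1, by omega⟩
  have B := congrFun h ⟨k - 1, by omega⟩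
  have A' := congrFun h ⟨i' - 1, by omega⟩
  have B' := congrFun h ⟨k' - 1, by omega⟩
  simp only [betaA] at A B A' B'
  split_ifs at A B A' B' <;> omega

lemma betaA_mem {r i k : ℕ} (h1 : 1 ≤ i) (h2 : i ≤ k) (h3 : k ≤ r) :
    betaA r i k ∈ posRootsA r := by
  rw [posRootsA, Finset.mem_image]
  exact ⟨(i, k), by simp [Finset.mem_filter, Finset.mem_Icc]; omega, rfl⟩

/-- `Ξ(T)` evaluated at a positive root. -/
lemma XiA_apply (r : ℕ) (T : TabA r) (i : Fin r) (k : ℕ)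
    (hk : i.1 + 1 ≤ k) (hk2 : k ≤ r) :
    XiA r T (betaA r (i.1 + 1) k) = ellA r T i (k + 1) := by
  rw [XiA, Finset.sum_eq_single i]
  · rw [Finset.sum_eq_single k]
    · rw [if_pos rfl]
    · intro b hb hbk
      rw [Finset.mem_Icc] at hb
      rw [if_neg]
      intro hcontra
      exact hbk (betaA_inj (by omega) hb.1 hb.2 (by omega) hk hk2 hcontra.symm).2
    · intro hks
      rw [Finset.mem_Icc] at hks
      omega
  · intro b _ hbi
    apply Finset.sum_eq_zero
    intro k' hk'
    rw [Finset.mem_Icc] at hk'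
    rw [if_neg]
    intro hcontra
    have := (betaA_inj (by omega) hk'.1 hk'.2 (by omega) hk hk2 hcontra.symm).1
    exact hbi (Fin.ext (by omega))
  · intro h
    exact absurd (Finset.mem_univ i) h

lemma row_all_ge (r : ℕ) (T : TabA r) (i : Fin r) :
    ∀ x ∈ T.row i, i.1 + 1 ≤ x := by
  intro x hx
  have hh := T.first_col i
  have hw := T.row_weak i
  cases hrow : T.row i with
  | nil => rw [hrow] at hx; simp at hx
  | cons b t =>
    rw [hrow] at hh hx hw
    obtain rfl : b = i.1 + 1 := by simpa using hh
    unfold List.Chain' at hw; rw [List.isChain_iff_pairwise, List.pairwise_cons] at hw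
    rcases List.mem_cons.1 hx with rfl | hm
    · exact le_refl _
    · exact hw.1 _ hm

lemma ell_eq_zero_lt (r : ℕ) (T : TabA r) (i : Fin r) {k : ℕ} (hk : k < i.1 + 1) :
    ellA r T i k = 0 := by
  rw [ellA, List.count_eq_zero]
  intro hm
  exact absurd (row_all_ge r T i k hm) (by omega)

lemma ell_eq_zero_gt (r : ℕ) (T : TabA r) (i : Fin r) {k : ℕ} (hk : r + 1 < k) :
    ellA r T i k = 0 := by
  rw [ellA, List.count_eq_zero]
  intro hm
  exact absurd (T.entry_mem i k hm).2 (by omega)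

lemma row_length_eq (r : ℕ) (T : TabA r) (i : Fin r) :
    (T.row i).length = ∑ k ∈ Finset.Icc (i.1 + 1) (r + 1), ellA r T i k := by
  apply S1.length_eq_sum_counts
  intro x hx
  rw [Finset.mem_Icc]
  exact ⟨row_all_ge r T i x hx, (T.entry_mem i x hx).2⟩

lemma TabA_ext {r : ℕ} {T T' : TabA r} (h : T.row = T'.row) : T = T' := by
  cases T; cases T'; cases h; rfl

/-- A tableau is determined by its `ℓ_{i,k}` for `k ≥ i+2`. -/
lemma row_eq_of_ell {r : ℕ} (T T' : TabA r)
    (h : ∀ i : Fin r, ∀ k ∈ Finset.Icc (i.1 + 2) (r + 1), ellA r T i k = ellA r T' i k) :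
    T.row = T'.row := by
  have key : ∀ d : ℕ, ∀ i : Fin r, r - i.1 ≤ d → T.row i = T'.row i := by
    intro d
    induction d with
    | zero => intro i hi; omega
    | succ d ih =>
      intro i hi
      have hc : ∀ k, (T.row i).count k = (T'.row i).count k := by
        intro k
        rcases lt_trichotomy k (i.1 + 1) with hlt | heq | hgt
        · rw [show (T.row i).count k = ellA r T i k from rfl,
            show (T'.row i).count k = ellA r T' i k from rfl,
            ell_eq_zero_lt r T i hlt, ell_eq_zero_lt r T' i hlt]
        · subst heq
          rw [T.marg_large i, T'.marg_large i]
          by_cases hh : i.1 + 1 < r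
          · rw [dif_pos hh, dif_pos hh, ih ⟨i.1 + 1, hh⟩ (by simp; omega)]
          · rw [dif_neg hh, dif_neg hh]
        · by_cases hbig : k ≤ r + 1
          · exact h i k (Finset.mem_Icc.2 ⟨by omega, hbig⟩)
          · rw [show (T.row i).count k = ellA r T i k from rfl,
              show (T'.row i).count k = ellA r T' i k from rfl,
              ell_eq_zero_gt r T i (by omega), ell_eq_zero_gt r T' i (by omega)]
      exact S1.eq_of_counts (T.row_weak i) (T'.row_weak i) hc
  funext i
  exact key r i (by omega)

namespace S1

/-- length of row `i` (0-indexed) of the tableau built from counts `c`. -/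
def lenRow (r : ℕ) (c : ℕ → ℕ → ℕ) : ℕ → ℕ
  | i => if h : i < r then
      lenRow r c (i + 1) + 1 + ((List.range' (i + 2) (r - i)).map (c i)).sum
    else 0
  termination_by i => r - i
  decreasing_by omega

lemma lenRow_lt {r c i} (h : i < r) : lenRow r c i =
    lenRow r c (i + 1) + 1 + ((List.range' (i + 2) (r - i)).map (c i)).sum := by
  rw [lenRow, dif_pos h]

lemma lenRow_ge {r c i} (h : r ≤ i) : lenRow r c i = 0 := by
  rw [lenRow, dif_neg (by omega)]

/-- row `i` (0-indexed) of the tableau built from counts `c`. -/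
def rowOf (r : ℕ) (c : ℕ → ℕ → ℕ) (i : ℕ) : List ℕ :=
  List.replicate (lenRow r c (i + 1) + 1) (i + 1) ++ blocks (i + 2) (r - i) (c i)

lemma rowOf_length {r c i} (h : i < r) : (rowOf r c i).length = lenRow r c i := by
  rw [rowOf, List.length_append, List.length_replicate, blocks_length, lenRow_lt h]

lemma rowOf_count {r c} (i k : ℕ) : (rowOf r c i).count k =
    (if i + 1 = k then lenRow r c (i + 1) + 1 else 0) +
    (if i + 2 ≤ k ∧ k < i + 2 + (r - i) then c i k else 0) := by
  rw [rowOf, List.count_append, List.count_replicate, blocks_count]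
  congr 1
  by_cases h : i + 1 = k <;> simp [h]

lemma rowOf_mem {r c i x} (hx : x ∈ rowOf r c i) : x = i + 1 ∨ (i + 2 ≤ x ∧ x < i + 2 + (r - i)) := by
  rw [rowOf, List.mem_append] at hx
  rcases hx with hx | hx
  · exact Or.inl (List.eq_of_mem_replicate hx)
  · exact Or.inr (mem_blocks hx)

lemma rowOf_chain' (r c i) : (rowOf r c i).Chain' (· ≤ ·) := by
  unfold List.Chain'; rw [List.isChain_iff_pairwise, rowOf, List.pairwise_append]
  refine ⟨List.pairwise_replicate.2 (Or.inr le_rfl), blocks_pairwise _ _ _, ?_⟩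
  intro a ha b hb
  rw [List.eq_of_mem_replicate ha]
  have := (mem_blocks hb).1
  omega

lemma rowOf_head (r c i) : (rowOf r c i).head? = some (i + 1) := by
  rw [rowOf, List.replicate_succ]
  rfl

/-- The tableau built from counts `c`. -/
def mkTab (r : ℕ) (c : ℕ → ℕ → ℕ) : TabA r where
  row i := rowOf r c i.1
  entry_mem i e he := by
    rcases rowOf_mem he with rfl | h
    · have := i.2; omega
    · have := i.2; omega
  row_weak i := rowOf_chain' r c i.1
  first_col i := rowOf_head r c i.1
  col_le i h := by
    show (rowOf r c (i.1 + 1)).length ≤ (rowOf r c i.1).length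
    rw [rowOf_length h, rowOf_length (show i.1 < r by omega), lenRow_lt (show i.1 < r by omega)]
    omega
  col_strict i h j hj := by
    show (rowOf r c i.1).getD j 0 < (rowOf r c (i.1 + 1)).getD j 0
    replace hj : j < (rowOf r c (i.1 + 1)).length := hj
    rw [rowOf_length h] at hj
    have hi : i.1 < r := by omega
    have hjlen : j < (List.replicate (lenRow r c (i.1 + 1) + 1) (i.1 + 1)).length := by
      rw [List.length_replicate]; omega
    have h1 : (rowOf r c i.1).getD j 0 = i.1 + 1 := by
      rw [rowOf, List.getD_append _ _ _ _ hjlen, List.getD_eq_getElem _ _ hjlen,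
        List.getElem_replicate]
    have hj2 : j < (rowOf r c (i.1 + 1)).length := by rw [rowOf_length h]; exact hj
    have h2 : (rowOf r c (i.1 + 1)).getD j 0 ∈ rowOf r c (i.1 + 1) := by
      rw [List.getD_eq_getElem _ _ hj2]; exact List.getElem_mem hj2
    have := rowOf_mem h2
    rw [h1]
    omega
  marg_large i := by
    show (rowOf r c i.1).count (i.1 + 1) =
      (if h : i.1 + 1 < r then (rowOf r c (i.1 + 1)).length else 0) + 1
    rw [rowOf_count, if_pos rfl, if_neg (by omega), Nat.add_zero]
    by_cases h : i.1 + 1 < r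
    · rw [dif_pos h, rowOf_length h]
    · rw [dif_neg h, lenRow_ge (by omega)]

end S1


lemma S1.mkTab_ell (r : ℕ) (c : ℕ → ℕ → ℕ) (i : Fin r) (k : ℕ)
    (hk : i.1 + 2 ≤ k) (hk2 : k ≤ r + 1) :
    ellA r (S1.mkTab r c) i k = c i.1 k := by
  show (S1.rowOf r c i.1).count k = c i.1 k
  rw [S1.rowOf_count, if_neg (by omega), if_pos (by have := i.2; omega), Nat.zero_add]

/-- the counts function extracted from a function on positive roots -/
def cgA (r : ℕ) (g : {v // v ∈ posRootsA r} → ℕ) (i k : ℕ) : ℕ :=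
  if h : i < r ∧ i + 2 ≤ k ∧ k ≤ r + 1 then
    g ⟨betaA r (i + 1) (k - 1), betaA_mem (by omega) (by omega) (by omega)⟩
  else 0

lemma bij_part (r : ℕ) (hr : 1 ≤ r) :
    Function.Bijective
      (fun (T : TabA r) (α : {v // v ∈ posRootsA r}) => XiA r T α.1) := by
  constructor
  · intro T T' h
    apply TabA_ext
    apply row_eq_of_ell
    intro i k hk
    rw [Finset.mem_Icc] at hk
    have hik : i.1 + 1 ≤ k - 1 := by omega
    have hkr : k - 1 ≤ r := by omega
    have hmem := betaA_mem (i := i.1 + 1) (k := k - 1) (by omega) hik hkr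
    have hc := congrFun h ⟨betaA r (i.1 + 1) (k - 1), hmem⟩
    simp only at hc
    rw [XiA_apply r T i (k - 1) hik hkr, XiA_apply r T' i (k - 1) hik hkr] at hc
    rwa [show k - 1 + 1 = k by omega] at hc
  · intro g
    refine ⟨S1.mkTab r (cgA r g), ?_⟩
    funext α
    obtain ⟨v, hv⟩ := α
    simp only
    rw [posRootsA, Finset.mem_image] at hv
    obtain ⟨⟨p1, p2⟩, hp, rfl⟩ := hv
    rw [Finset.mem_filter, Finset.mem_product, Finset.mem_Icc, Finset.mem_Icc] at hp
    obtain ⟨⟨⟨hp11, hp12⟩, hp21, hp22⟩, hple⟩ := hp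
    have e1 : p1 - 1 + 1 = p1 := by omega
    have happ2 : XiA r (S1.mkTab r (cgA r g)) (betaA r p1 p2)
        = ellA r (S1.mkTab r (cgA r g)) ⟨p1 - 1, by omega⟩ (p2 + 1) := by
      rw [show betaA r p1 p2 = betaA r (p1 - 1 + 1) p2 from by rw [e1]]
      exact XiA_apply r (S1.mkTab r (cgA r g)) ⟨p1 - 1, by omega⟩ p2
        (by simp only; omega) hp22
    show XiA r (S1.mkTab r (cgA r g)) (betaA r p1 p2) = g ⟨betaA r p1 p2, hv⟩
    rw [happ2, S1.mkTab_ell r _ _ _ (by simp only; omega) (by omega)]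
    rw [cgA, dif_pos (by simp only; omega)]
    congr 1
    apply Subtype.ext
    simp only
    rw [e1, Nat.add_sub_cancel]

lemma sigma_eq' {r : ℕ} {a b : Σ _ : Fin r, ℕ} (h1 : a.1.1 = b.1.1) (h2 : a.2 = b.2) :
    a = b := by
  obtain ⟨⟨a1, ha1⟩, a2⟩ := a
  obtain ⟨⟨b1, hb1⟩, b2⟩ := b
  simp only at h1 h2
  subst h1; subst h2; rfl

lemma seg_part (r : ℕ) (T : TabA r) :
    segA r T = ((posRootsA r).filter fun v => XiA r T v ≠ 0).card := by
  classical
  rw [posRootsA, Finset.filter_image, Finset.filter_filter,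
    Finset.card_image_of_injOn]
  · rw [segA, ← Finset.card_sigma]
    apply Finset.card_bij (fun a _ => (a.1.1 + 1, a.2 - 1))
    · intro a ha
      rw [Finset.mem_sigma, Finset.mem_filter, Finset.mem_Icc] at ha
      obtain ⟨-, ⟨hk1, hk2⟩, hne⟩ := ha
      rw [Finset.mem_filter, Finset.mem_product, Finset.mem_Icc, Finset.mem_Icc]
      have hik : a.1.1 + 1 ≤ a.2 - 1 := by omega
      have hkr : a.2 - 1 ≤ r := by omega
      have h2 := a.1.2
      refine ⟨⟨⟨by omega, by omega⟩, by omega, hkr⟩, hik, ?_⟩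
      rw [XiA_apply r T a.1 (a.2 - 1) hik hkr, show a.2 - 1 + 1 = a.2 by omega]
      exact hne
    · intro a1 ha1 a2 ha2 heq
      rw [Finset.mem_sigma, Finset.mem_filter, Finset.mem_Icc] at ha1 ha2
      rw [Prod.mk.injEq] at heq
      obtain ⟨e1, e2⟩ := heq
      exact sigma_eq' (by omega) (by omega)
    · rintro ⟨p1, p2⟩ hb
      rw [Finset.mem_filter, Finset.mem_product, Finset.mem_Icc, Finset.mem_Icc] at hb
      obtain ⟨⟨⟨hp11, hp12⟩, hp21, hp22⟩, hple, hne⟩ := hb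
      have e1 : p1 - 1 + 1 = p1 := by omega
      have happ2 : XiA r T (betaA r p1 p2) = ellA r T ⟨p1 - 1, by omega⟩ (p2 + 1) := by
        rw [show betaA r p1 p2 = betaA r (p1 - 1 + 1) p2 from by rw [e1]]
        exact XiA_apply r T ⟨p1 - 1, by omega⟩ p2 (by simp only; omega) hp22
      refine ⟨⟨⟨p1 - 1, by omega⟩, p2 + 1⟩, ?_, ?_⟩
      · refine Finset.mem_sigma.mpr ⟨Finset.mem_univ _, Finset.mem_filter.mpr
          ⟨Finset.mem_Icc.mpr ⟨by show p1 - 1 + 2 ≤ p2 + 1; omega,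
            by show p2 + 1 ≤ r + 1; omega⟩, ?_⟩⟩
        show ellA r T ⟨p1 - 1, by omega⟩ (p2 + 1) ≠ 0
        rw [← happ2]
        exact hne
      · show (p1 - 1 + 1, p2 + 1 - 1) = (p1, p2)
        rw [Prod.mk.injEq]
        omega
  · intro x hx y hy hxy
    rw [Finset.coe_filter, Set.mem_setOf_eq, Finset.mem_product, Finset.mem_Icc,
      Finset.mem_Icc] at hx hy
    have := betaA_inj hx.1.1.1 hx.2.1 hx.1.2.2 hy.1.1.1 hy.2.1 hy.1.2.2 hxy
    exact Prod.ext this.1 this.2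

lemma wt_part (r : ℕ) (hr : 1 ≤ r) (T : TabA r) :
    negwtA r T = ∑ v ∈ posRootsA r, XiA r T v • v := by
  classical
  rw [posRootsA, Finset.sum_image]
  · rw [negwtA, Finset.sum_sigma']
    apply Finset.sum_nbij' (i := fun a => (a.1.1 + 1, a.2 - 1))
      (j := fun p => ⟨⟨(p.1 - 1) % r, Nat.mod_lt _ (by omega)⟩, p.2 + 1⟩)
    · intro a ha
      rw [Finset.mem_sigma, Finset.mem_Icc] at ha
      obtain ⟨-, hk1, hk2⟩ := ha
      rw [Finset.mem_filter, Finset.mem_product, Finset.mem_Icc, Finset.mem_Icc]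
      have := a.1.2
      exact ⟨⟨⟨by omega, by omega⟩, by omega, by omega⟩, by omega⟩
    · rintro ⟨p1, p2⟩ hb
      rw [Finset.mem_filter, Finset.mem_product, Finset.mem_Icc, Finset.mem_Icc] at hb
      obtain ⟨⟨⟨hp11, hp12⟩, hp21, hp22⟩, hple⟩ := hb
      refine Finset.mem_sigma.mpr ⟨Finset.mem_univ _, Finset.mem_Icc.mpr ⟨?_, ?_⟩⟩
      · show (p1 - 1) % r + 2 ≤ p2 + 1
        rw [Nat.mod_eq_of_lt (by omega)]
        omega
      · show p2 + 1 ≤ r + 1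
        omega
    · intro a ha
      rw [Finset.mem_sigma, Finset.mem_Icc] at ha
      obtain ⟨-, hk1, hk2⟩ := ha
      have := a.1.2
      refine sigma_eq' ?_ (by show a.2 - 1 + 1 = a.2; omega)
      show (a.1.1 + 1 - 1) % r = a.1.1
      rw [Nat.add_sub_cancel, Nat.mod_eq_of_lt this]
    · rintro ⟨p1, p2⟩ hb
      rw [Finset.mem_filter, Finset.mem_product, Finset.mem_Icc, Finset.mem_Icc] at hb
      obtain ⟨⟨⟨hp11, hp12⟩, hp21, hp22⟩, hple⟩ := hb
      show ((p1 - 1) % r + 1, p2 + 1 - 1) = (p1, p2)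
      rw [Prod.mk.injEq]
      rw [Nat.mod_eq_of_lt (by omega)]
      omega
    · intro a ha
      rw [Finset.mem_sigma, Finset.mem_Icc] at ha
      obtain ⟨-, hk1, hk2⟩ := ha
      have := a.1.2
      have hik : a.1.1 + 1 ≤ a.2 - 1 := by omega
      have hkr : a.2 - 1 ≤ r := by omega
      show ellA r T a.1 a.2 • betaA r (a.1.1 + 1) (a.2 - 1) =
        XiA r T (betaA r (a.1.1 + 1) (a.2 - 1)) • betaA r (a.1.1 + 1) (a.2 - 1)
      rw [XiA_apply r T a.1 (a.2 - 1) hik hkr, show a.2 - 1 + 1 = a.2 by omega]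
  · intro x hx y hy hxy
    rw [Finset.mem_coe, Finset.mem_filter, Finset.mem_product, Finset.mem_Icc, Finset.mem_Icc] at hx hy
    have := betaA_inj hx.1.1.1 hx.2 hx.1.2.2 hy.1.1.1 hy.2 hy.1.2.2 hxy
    exact Prod.ext this.1 this.2

/-- `Ξ` is a bijection from `𝒯(∞)` onto the set of all functions
from the positive roots of `A_r` to `ℕ`; moreover `seg(T)` is the number of
positive roots where `Ξ(T)` is nonzero, and `wt(T) = -Σ_α Ξ(T)(α)·α`. -/
theorem stmt1 (r : ℕ) (hr : 1 ≤ r) :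
    Function.Bijective
      (fun (T : TabA r) (α : {v // v ∈ posRootsA r}) => XiA r T α.1) ∧
    (∀ T : TabA r,
      segA r T = ((posRootsA r).filter fun v => XiA r T v ≠ 0).card) ∧
    (∀ T : TabA r,
      wtA r T = fun j => -(((∑ v ∈ posRootsA r, XiA r T v • v) j : ℕ) : ℤ)) := by
  refine ⟨bij_part r hr, fun T => seg_part r T, fun T => ?_⟩
  funext j
  rw [wtA]
  rw [← wt_part r hr T]
end

section
/- In the formal power series ring ℤ[[t, z_1, …, z_r]], writing z^α = z_1^{m_1}⋯z_r^{m_r} for α = m_1α_1 + ⋯ + m_rα_r in the positive root lattice of A_r, one has ∏_{1≤i≤k≤r} (1 − t·z^{β_{i,k}})·(1 − z^{β_{i,k}})^{-1} = Σ_{T ∈ 𝒯(∞)} (1 − t)^{seg(T)} · z^{−wt(T)}, where the right-hand side is a well-defined formal power series because for each monomial only finitely many T ∈ 𝒯(∞) contribute. -/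
open MvPowerSeries

namespace GKaux

noncomputable def emb (r : ℕ) (v : Fin r → ℕ) : Option (Fin r) →₀ ℕ :=
  Finsupp.equivFunOnFinite.symm fun o => Option.elim o 0 v

lemma zmon_def (r : ℕ) (v : Fin r → ℕ) :
    zmon r v = MvPowerSeries.monomial (emb r v) 1 := rfl

lemma emb_apply (r : ℕ) (v : Fin r → ℕ) (o : Option (Fin r)) :
    emb r v o = Option.elim o 0 v := rfl

lemma emb_add (r : ℕ) (v w : Fin r → ℕ) : emb r (v + w) = emb r v + emb r w := by
  ext o; cases o <;> simp [emb_apply]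

lemma emb_zero (r : ℕ) : emb r 0 = 0 := by
  ext o; cases o <;> simp [emb_apply]

lemma zmon_zero (r : ℕ) : zmon r 0 = 1 := by
  rw [zmon_def, emb_zero, MvPowerSeries.monomial_zero_one]

lemma zmon_mul (r : ℕ) (v w : Fin r → ℕ) : zmon r v * zmon r w = zmon r (v + w) := by
  rw [zmon_def, zmon_def, zmon_def, MvPowerSeries.monomial_mul_monomial, emb_add, one_mul]

lemma zmon_pow (r : ℕ) (v : Fin r → ℕ) (n : ℕ) : zmon r v ^ n = zmon r (n • v) := by
  induction n with
  | zero => simp [zmon_zero]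
  | succ n ih =>
    rw [pow_succ, ih, zmon_mul]
    congr 1
    rw [succ_nsmul]

lemma zmon_sum {ι : Type*} (r : ℕ) (s : Finset ι) (w : ι → (Fin r → ℕ)) :
    ∏ p ∈ s, zmon r (w p) = zmon r (∑ p ∈ s, w p) := by
  classical
  induction s using Finset.induction with
  | empty => simp [zmon_zero]
  | insert _ _ h ih =>
    rw [Finset.prod_insert h, Finset.sum_insert h, ih, zmon_mul]

/-- the `z`-weight of an exponent -/
def W (r : ℕ) (f : Option (Fin r) →₀ ℕ) : ℕ := ∑ j : Fin r, f (some j)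

lemma W_emb (r : ℕ) (v : Fin r → ℕ) : W r (emb r v) = ∑ j, v j := by
  simp [W, emb_apply]

lemma W_mono {r : ℕ} {f g : Option (Fin r) →₀ ℕ} (h : f ≤ g) : W r f ≤ W r g :=
  Finset.sum_le_sum fun j _ => h (some j)

lemma coeff_zmon_mul_eq_zero {r : ℕ} (f : Option (Fin r) →₀ ℕ) (v : Fin r → ℕ)
    (ψ : MvPowerSeries (Option (Fin r)) ℤ) (h : W r f < ∑ j, v j) :
    MvPowerSeries.coeff f (zmon r v * ψ) = 0 := by
  rw [zmon_def, MvPowerSeries.coeff_monomial_mul]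
  rw [if_neg]
  intro hle
  have := W_mono (r := r) hle
  rw [W_emb] at this
  omega

/-- agreement of coefficients up to `z`-weight `N` -/
def Rel (r N : ℕ) (φ ψ : MvPowerSeries (Option (Fin r)) ℤ) : Prop :=
  ∀ f : Option (Fin r) →₀ ℕ, W r f ≤ N → MvPowerSeries.coeff f φ = MvPowerSeries.coeff f ψ

lemma Rel.mul_left {r N : ℕ} {φ ψ : MvPowerSeries (Option (Fin r)) ℤ}
    (χ : MvPowerSeries (Option (Fin r)) ℤ) (h : Rel r N φ ψ) : Rel r N (χ * φ) (χ * ψ) := by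
  intro f hf
  classical
  rw [MvPowerSeries.coeff_mul, MvPowerSeries.coeff_mul]
  refine Finset.sum_congr rfl fun p hp => ?_
  rw [Finset.HasAntidiagonal.mem_antidiagonal] at hp
  have h2 : p.2 ≤ f := hp ▸ le_add_self
  rw [h p.2 (le_trans (W_mono h2) hf)]

lemma Rel.prod {r N : ℕ} {ι : Type*} (s : Finset ι)
    (F S : ι → MvPowerSeries (Option (Fin r)) ℤ) (h : ∀ p ∈ s, Rel r N (F p) (S p)) :
    Rel r N (∏ p ∈ s, F p) (∏ p ∈ s, S p) := by
  classical
  induction s using Finset.induction with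
  | empty => intro f _; rfl
  | @insert a s ha ih =>
    rw [Finset.prod_insert ha, Finset.prod_insert ha]
    intro f hf
    have h1 : Rel r N (F a * ∏ p ∈ s, F p) (F a * ∏ p ∈ s, S p) :=
      Rel.mul_left _ (ih fun p hp => h p (Finset.mem_insert_of_mem hp))
    have h2 : Rel r N (F a * ∏ p ∈ s, S p) (S a * ∏ p ∈ s, S p) := by
      rw [mul_comm (F a), mul_comm (S a)]
      exact Rel.mul_left _ (h a (Finset.mem_insert_self a s))
    rw [h1 f hf, h2 f hf]

lemma constCoeff_one_sub_zmon {r : ℕ} {v : Fin r → ℕ} (hv : 0 < ∑ j, v j) :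
    MvPowerSeries.constantCoeff (1 - zmon r v) = 1 := by
  have hne : emb r v ≠ 0 := by
    intro h0
    have := W_emb r v
    rw [h0] at this
    simp [W] at this
    omega
  rw [map_sub, map_one, zmon_def]
  rw [← MvPowerSeries.coeff_zero_eq_constantCoeff_apply, MvPowerSeries.coeff_monomial]
  simp [Ne.symm hne]

lemma one_sub_zmon_mul_inv {r : ℕ} {v : Fin r → ℕ} (hv : 0 < ∑ j, v j) :
    (1 - zmon r v) * MvPowerSeries.invOfUnit (1 - zmon r v) 1 = 1 :=
  MvPowerSeries.mul_invOfUnit _ 1 (by rw [constCoeff_one_sub_zmon hv]; rfl)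

lemma inv_geom {r : ℕ} {v : Fin r → ℕ} (hv : 0 < ∑ j, v j) (M : ℕ) :
    MvPowerSeries.invOfUnit (1 - zmon r v) 1
      = (∑ n ∈ Finset.range M, zmon r v ^ n)
        + zmon r v ^ M * MvPowerSeries.invOfUnit (1 - zmon r v) 1 := by
  have h1 := one_sub_zmon_mul_inv hv
  have h2 : (1 - zmon r v) * (∑ n ∈ Finset.range M, zmon r v ^ n) = 1 - zmon r v ^ M := by
    have := geom_sum_mul (zmon r v) M
    linear_combination -this
  linear_combination (∑ n ∈ Finset.range M, zmon r v ^ n) * h1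
    - MvPowerSeries.invOfUnit (1 - zmon r v) 1 * h2

end GKaux

namespace GKaux

noncomputable def gterm (r : ℕ) (v : Fin r → ℕ) (n : ℕ) : MvPowerSeries (Option (Fin r)) ℤ :=
  (1 - tvar r) ^ (if n = 0 then 0 else 1) * zmon r (n • v)

noncomputable def Strunc (r N : ℕ) (v : Fin r → ℕ) : MvPowerSeries (Option (Fin r)) ℤ :=
  ∑ n ∈ Finset.range (N + 1), gterm r v n

lemma Strunc_eq (r N : ℕ) (v : Fin r → ℕ) :
    Strunc r N v = 1 + ∑ n ∈ Finset.range N, (1 - tvar r) * zmon r v ^ (n + 1) := by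
  rw [Strunc, Finset.sum_range_succ']
  have h0 : gterm r v 0 = 1 := by
    simp [gterm, zmon_zero]
  rw [h0, add_comm]
  congr 1
  refine Finset.sum_congr rfl fun n _ => ?_
  rw [gterm, if_neg (Nat.succ_ne_zero n), pow_one, zmon_pow]

lemma F_eq {r : ℕ} {v : Fin r → ℕ} (hv : 0 < ∑ j, v j) (N : ℕ) :
    (1 - tvar r * zmon r v) * MvPowerSeries.invOfUnit (1 - zmon r v) 1
      = Strunc r N v
        + zmon r ((N + 1) • v) * ((1 - tvar r) * MvPowerSeries.invOfUnit (1 - zmon r v) 1) := by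
  have h1 := one_sub_zmon_mul_inv hv
  have hgeo := inv_geom hv N
  rw [Strunc_eq]
  have hsum : ∑ n ∈ Finset.range N, (1 - tvar r) * zmon r v ^ (n + 1)
      = (1 - tvar r) * zmon r v * ∑ n ∈ Finset.range N, zmon r v ^ n := by
    rw [Finset.mul_sum]
    refine Finset.sum_congr rfl fun n _ => ?_
    ring
  rw [hsum, ← zmon_pow r v (N + 1)]
  linear_combination h1 + ((1 - tvar r) * zmon r v) * hgeo

lemma rel_F_Strunc {r : ℕ} {v : Fin r → ℕ} (hv : 0 < ∑ j, v j) (N : ℕ) :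
    Rel r N ((1 - tvar r * zmon r v) * MvPowerSeries.invOfUnit (1 - zmon r v) 1)
      (Strunc r N v) := by
  intro f hf
  rw [F_eq hv N, map_add, coeff_zmon_mul_eq_zero]
  · rw [add_zero]
  · calc W r f ≤ N := hf
      _ < (N + 1) * ∑ j, v j := by nlinarith
      _ = ∑ j, (N+1) • v j := by rw [Finset.mul_sum]; rfl
      _ = ∑ j, ((N+1) • v) j := rfl

end GKaux

namespace GKaux

/-- index set of pairs `(i,k)` with `i+2 ≤ k ≤ r+1` (row `i`, entry `k`) -/
def Pset (r : ℕ) : Finset ((_ : Fin r) × ℕ) :=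
  Finset.univ.sigma fun i => Finset.Icc (i.1 + 2) (r + 1)

lemma mem_Pset {r : ℕ} {p : (_ : Fin r) × ℕ} :
    p ∈ Pset r ↔ p.1.1 + 2 ≤ p.2 ∧ p.2 ≤ r + 1 := by
  cases p with
  | mk i k => simp [Pset, Finset.mem_sigma, Finset.mem_Icc]

def beta' (r : ℕ) (p : (_ : Fin r) × ℕ) : Fin r → ℕ := betaA r (p.1.1 + 1) (p.2 - 1)

lemma betaA_apply (r i k : ℕ) (j : Fin r) :
    betaA r i k j = if i ≤ j.1 + 1 ∧ j.1 + 1 ≤ k then 1 else 0 := rfl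

lemma betaA_inj {r a b a' b' : ℕ} (ha : 1 ≤ a) (hab : a ≤ b) (hb : b ≤ r)
    (ha' : 1 ≤ a') (hab' : a' ≤ b') (hb' : b' ≤ r)
    (h : betaA r a b = betaA r a' b') : a = a' ∧ b = b' := by
  have key : ∀ x y x' y' : ℕ, 1 ≤ x → x ≤ y → y ≤ r →
      betaA r x y = betaA r x' y' → (x' ≤ x ∧ x ≤ y') ∧ (x' ≤ y ∧ y ≤ y') := by
    intro x y x' y' hx hxy hyr heq
    constructor
    · have hj : x - 1 < r := by omega
      have := congrFun heq ⟨x - 1, hj⟩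
      rw [betaA_apply, betaA_apply] at this
      rw [if_pos (by simp; omega)] at this
      by_contra hc
      rw [if_neg (by simp; omega)] at this
      exact one_ne_zero this
    · have hj : y - 1 < r := by omega
      have := congrFun heq ⟨y - 1, hj⟩
      rw [betaA_apply, betaA_apply] at this
      rw [if_pos (by simp; omega)] at this
      by_contra hc
      rw [if_neg (by simp; omega)] at this
      exact one_ne_zero this
  have k1 := key a b a' b' ha hab hb h
  have k2 := key a' b' a b ha' hab' hb' h.symm
  omega

lemma beta'_inj {r : ℕ} : ∀ p ∈ Pset r, ∀ q ∈ Pset r, beta' r p = beta' r q → p = q := by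
  rintro ⟨i, k⟩ hp ⟨i', k'⟩ hq h
  simp only [mem_Pset] at hp hq
  simp only [beta'] at h
  have hi : i.1 + 2 ≤ k := hp.1
  have hi' : i'.1 + 2 ≤ k' := hq.1
  have := betaA_inj (by omega : 1 ≤ i.1 + 1) (by omega) (by omega : k - 1 ≤ r)
    (by omega : 1 ≤ i'.1 + 1) (by omega) (by omega : k' - 1 ≤ r) h
  have hii : i = i' := Fin.ext (by omega)
  subst hii
  have : k = k' := by omega
  subst this
  rfl

lemma posRoots_eq (r : ℕ) : posRootsA r = (Pset r).image (beta' r) := by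
  ext v
  simp only [posRootsA, Finset.mem_image, Finset.mem_filter, Finset.mem_product,
    Finset.mem_Icc]
  constructor
  · rintro ⟨⟨i, k⟩, ⟨⟨⟨hi1, hir⟩, ⟨hk1, hkr⟩⟩, hik⟩, hv⟩
    refine ⟨⟨⟨i - 1, by omega⟩, k + 1⟩,
      mem_Pset.mpr ⟨by show i - 1 + 2 ≤ k + 1; omega, by show k + 1 ≤ r + 1; omega⟩, ?_⟩
    show betaA r (i - 1 + 1) (k + 1 - 1) = v
    rw [show i - 1 + 1 = i by omega, show k + 1 - 1 = k from rfl]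
    exact hv
  · rintro ⟨p, hp, hv⟩
    rw [mem_Pset] at hp
    refine ⟨⟨p.1.1 + 1, p.2 - 1⟩, ⟨⟨⟨by omega, by omega⟩, by omega, by omega⟩,
      by show p.1.1 + 1 ≤ p.2 - 1; omega⟩, hv⟩

lemma beta'_pos {r : ℕ} {p : (_ : Fin r) × ℕ} (hp : p ∈ Pset r) :
    0 < ∑ j, beta' r p j := by
  rw [mem_Pset] at hp
  have h1 : beta' r p p.1 = 1 := by
    rw [beta', betaA_apply, if_pos]
    omega
  calc (0:ℕ) < beta' r p p.1 := by omega
    _ ≤ ∑ j, beta' r p j :=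
      Finset.single_le_sum (fun j _ => Nat.zero_le _) (Finset.mem_univ p.1)

end GKaux

namespace GKaux

/-- length of row `i` of the tableau built from multiplicities `c` -/
def rowLen (r : ℕ) (c : ℕ → ℕ → ℕ) (i : ℕ) : ℕ :=
  ((List.range' (i + 2) (r - i)).map (c i)).sum + 1 +
    (if h : i + 1 < r then rowLen r c (i + 1) else 0)
termination_by r - i
decreasing_by omega

def fcnt (r : ℕ) (c : ℕ → ℕ → ℕ) (i : ℕ) : ℕ → ℕ := fun k =>
  if k = i + 1 then (if _ : i + 1 < r then rowLen r c (i + 1) else 0) + 1 else c i k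

def mkRow (r : ℕ) (c : ℕ → ℕ → ℕ) (i : ℕ) : List ℕ :=
  (List.range' (i + 1) (r + 1 - i)).flatMap fun k => List.replicate (fcnt r c i k) k

lemma count_fm (f : ℕ → ℕ) (a s n : ℕ) :
    (((List.range' s n).flatMap fun k => List.replicate (f k) k).count a)
      = if s ≤ a ∧ a < s + n then f a else 0 := by
  induction n generalizing s with
  | zero =>
    rw [show List.range' s 0 = [] from rfl]
    simp only [List.flatMap_nil, List.count_nil]
    rw [if_neg (by omega)]
  | succ n ih =>
    rw [List.range'_succ, List.flatMap_cons, List.count_append, ih]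
    have hrep : ((List.replicate (f s) s).count a) = if a = s then f s else 0 := by
      simp [List.count_replicate]
      split_ifs with h1 h2 h2 <;> first | rfl | omega
    rw [hrep]
    by_cases h1 : a = s
    · subst h1
      rw [if_pos rfl, if_neg (by omega), if_pos ⟨le_rfl, by omega⟩]
      omega
    · rw [if_neg h1]
      split_ifs with h2 h3 h3 <;> first | rfl | omega

lemma sorted_fm (f : ℕ → ℕ) (s n : ℕ) :
    ((List.range' s n).flatMap fun k => List.replicate (f k) k).Pairwise (· ≤ ·) := by
  induction n generalizing s with
  | zero => simp
  | succ n ih =>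
    rw [List.range'_succ, List.flatMap_cons]
    rw [List.pairwise_append]
    refine ⟨List.pairwise_replicate.mpr (Or.inr le_rfl), ih (s + 1), ?_⟩
    intro x hx y hy
    have hx' : x = s := List.eq_of_mem_replicate hx
    obtain ⟨k, hk, hy'⟩ := List.mem_flatMap.mp hy
    have hy'' : y = k := List.eq_of_mem_replicate hy'
    have hk' := (List.mem_range'_1).mp hk
    omega

lemma mem_fm {f : ℕ → ℕ} {x s n : ℕ}
    (h : x ∈ (List.range' s n).flatMap fun k => List.replicate (f k) k) :
    s ≤ x ∧ x < s + n := by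
  obtain ⟨k, hk, hx⟩ := List.mem_flatMap.mp h
  have := List.eq_of_mem_replicate hx
  have := (List.mem_range'_1).mp hk
  omega

lemma count_mkRow (r : ℕ) (c : ℕ → ℕ → ℕ) {i : ℕ} (hi : i < r) (a : ℕ) :
    (mkRow r c i).count a = if i + 1 ≤ a ∧ a ≤ r + 1 then fcnt r c i a else 0 := by
  rw [mkRow, count_fm]
  split_ifs with h1 h2 h2 <;> first | rfl | omega

lemma sorted_mkRow (r : ℕ) (c : ℕ → ℕ → ℕ) (i : ℕ) :
    (mkRow r c i).Pairwise (· ≤ ·) := sorted_fm _ _ _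

lemma mem_mkRow {r : ℕ} {c : ℕ → ℕ → ℕ} {i x : ℕ} (hi : i < r) (h : x ∈ mkRow r c i) :
    i + 1 ≤ x ∧ x ≤ r + 1 := by
  have := mem_fm h
  omega

lemma mkRow_eq (r : ℕ) (c : ℕ → ℕ → ℕ) {i : ℕ} (hi : i < r) :
    mkRow r c i = List.replicate ((if _ : i + 1 < r then rowLen r c (i + 1) else 0) + 1) (i + 1)
      ++ ((List.range' (i + 2) (r - i)).flatMap fun k => List.replicate (c i k) k) := by
  rw [mkRow, show r + 1 - i = (r - i) + 1 by omega, List.range'_succ, List.flatMap_cons]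
  congr 1
  · rw [fcnt, if_pos rfl]
  · have hcong : ∀ k ∈ List.range' (i + 1 + 1) (r - i),
        List.replicate (fcnt r c i k) k = List.replicate (c i k) k := by
      intro k hk
      have := (List.mem_range'_1).mp hk
      rw [fcnt, if_neg (by omega)]
    rw [List.flatMap, List.flatMap, List.map_congr_left hcong]

lemma length_mkRow (r : ℕ) (c : ℕ → ℕ → ℕ) {i : ℕ} (hi : i < r) :
    (mkRow r c i).length = rowLen r c i := by
  rw [mkRow_eq r c hi, List.length_append, List.length_replicate]
  have h2 : (((List.range' (i + 2) (r - i)).flatMap fun k =>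
      List.replicate (c i k) k)).length = ((List.range' (i + 2) (r - i)).map (c i)).sum := by
    rw [List.length_flatMap]
    congr 1
    apply List.map_congr_left
    intro k _
    simp
  rw [h2]
  conv_rhs => rw [rowLen]
  omega

lemma head?_mkRow (r : ℕ) (c : ℕ → ℕ → ℕ) {i : ℕ} (hi : i < r) :
    (mkRow r c i).head? = some (i + 1) := by
  rw [mkRow_eq r c hi, List.replicate_succ, List.cons_append, List.head?_cons]

lemma getD_mkRow_lt (r : ℕ) (c : ℕ → ℕ → ℕ) {i : ℕ} (hi : i + 1 < r) {j : ℕ}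
    (hj : j < rowLen r c (i + 1)) : (mkRow r c i).getD j 0 = i + 1 := by
  rw [mkRow_eq r c (by omega), List.getD_append _ _ _ _
    (by rw [List.length_replicate, dif_pos hi]; omega)]
  rw [List.getD_eq_getElem _ _ (by rw [List.length_replicate, dif_pos hi]; omega)]
  simp

noncomputable def mkTab (r : ℕ) (c : ℕ → ℕ → ℕ) : TabA r where
  row i := mkRow r c i.1
  entry_mem i e he := by
    have := mem_mkRow i.isLt he
    omega
  row_weak i := List.isChain_iff_pairwise.mpr (sorted_mkRow r c i.1)
  first_col i := head?_mkRow r c i.isLt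
  col_le i h := by
    show (mkRow r c (i.1 + 1)).length ≤ (mkRow r c i.1).length
    rw [length_mkRow r c h, length_mkRow r c i.isLt]
    conv_rhs => rw [rowLen]
    rw [dif_pos h]
    omega
  col_strict i h j hj := by
    show (mkRow r c i.1).getD j 0 < (mkRow r c (i.1 + 1)).getD j 0
    have hj' : j < rowLen r c (i.1 + 1) := by
      have hj2 : j < (mkRow r c (i.1 + 1)).length := hj
      rwa [length_mkRow r c h] at hj2
    rw [getD_mkRow_lt r c h hj']
    have hlen : j < (mkRow r c (i.1 + 1)).length := by rw [length_mkRow r c h]; exact hj'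
    have hmem : (mkRow r c (i.1 + 1)).getD j 0 ∈ mkRow r c (i.1 + 1) := by
      rw [List.getD_eq_getElem _ _ hlen]
      exact List.getElem_mem _
    have := mem_mkRow h hmem
    omega
  marg_large i := by
    show (mkRow r c i.1).count (i.1 + 1)
      = (if h : i.1 + 1 < r then (mkRow r c (i.1 + 1)).length else 0) + 1
    rw [count_mkRow r c i.isLt, if_pos ⟨le_rfl, by have := i.isLt; omega⟩, fcnt, if_pos rfl]
    congr 1
    split
    · next h => rw [length_mkRow r c h]
    · rfl

lemma ell_mkTab (r : ℕ) (c : ℕ → ℕ → ℕ) (i : Fin r) (k : ℕ) (h2 : i.1 + 2 ≤ k)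
    (h3 : k ≤ r + 1) : ellA r (mkTab r c) i k = c i.1 k := by
  show (mkRow r c i.1).count k = _
  rw [count_mkRow r c i.isLt, if_pos ⟨by omega, h3⟩, fcnt, if_neg (by omega)]

lemma row_entries_ge {r : ℕ} (T : TabA r) (i : Fin r) : ∀ x ∈ T.row i, i.1 + 1 ≤ x := by
  have hs := List.isChain_iff_pairwise.mp (T.row_weak i)
  have hh := T.first_col i
  obtain ⟨tl, htl⟩ : ∃ tl, T.row i = (i.1 + 1) :: tl := by
    cases hrow : T.row i with
    | nil => rw [hrow] at hh; simp at hh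
    | cons a tl =>
      rw [hrow] at hh
      simp only [List.head?_cons, Option.some.injEq] at hh
      exact ⟨tl, by rw [hh]⟩
  rw [htl] at hs ⊢
  intro x hx
  rcases List.mem_cons.mp hx with rfl | hx
  · exact le_rfl
  · exact (List.pairwise_cons.mp hs).1 x hx

lemma count_row_zero_lt {r : ℕ} (T : TabA r) (i : Fin r) {k : ℕ} (hk : k < i.1 + 1) :
    (T.row i).count k = 0 :=
  List.count_eq_zero.mpr fun hm => by have := row_entries_ge T i k hm; omega

lemma count_row_zero_gt {r : ℕ} (T : TabA r) (i : Fin r) {k : ℕ} (hk : r + 1 < k) :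
    (T.row i).count k = 0 :=
  List.count_eq_zero.mpr fun hm => by have := (T.entry_mem i k hm).2; omega

lemma TabA_ext {r : ℕ} {T₁ T₂ : TabA r} (h : T₁.row = T₂.row) : T₁ = T₂ := by
  cases T₁; cases T₂
  simp only at h
  subst h
  rfl

lemma mkTab_eq {r : ℕ} (T : TabA r) (c : ℕ → ℕ → ℕ)
    (hc : ∀ (i : Fin r) (k : ℕ), i.1 + 2 ≤ k → k ≤ r + 1 → c i.1 k = ellA r T i k) :
    mkTab r c = T := by
  have main : ∀ d (i : Fin r), r - i.1 ≤ d → mkRow r c i.1 = T.row i := by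
    intro d
    induction d with
    | zero => intro i hi; exact absurd hi (by have := i.isLt; omega)
    | succ d ih =>
      intro i hi
      have hlen : ∀ h : i.1 + 1 < r, (T.row ⟨i.1 + 1, h⟩).length = rowLen r c (i.1 + 1) := by
        intro h
        rw [← ih ⟨i.1 + 1, h⟩ (by show r - (i.1 + 1) ≤ d; omega)]
        exact length_mkRow r c h
      have hcount : ∀ a, (mkRow r c i.1).count a = (T.row i).count a := by
        intro a
        rw [count_mkRow r c i.isLt]
        by_cases h1 : i.1 + 1 ≤ a ∧ a ≤ r + 1
        · obtain ⟨h1a, h1b⟩ := h1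
          rw [if_pos ⟨h1a, h1b⟩, fcnt]
          by_cases h2 : a = i.1 + 1
          · subst h2
            rw [if_pos rfl]
            rw [T.marg_large i]
            congr 1
            split
            · next h => exact (hlen h).symm
            · rfl
          · rw [if_neg h2, hc i a (by omega) h1b]
            rfl
        · rw [if_neg h1]
          rcases (by omega : a < i.1 + 1 ∨ r + 1 < a) with h | h
          · exact (count_row_zero_lt T i h).symm
          · exact (count_row_zero_gt T i h).symm
      exact List.Perm.eq_of_pairwise' (sorted_mkRow r c i.1)
        (List.isChain_iff_pairwise.mp (T.row_weak i)) (List.perm_iff_count.mpr hcount)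
  exact TabA_ext (funext fun i => main r i (by omega))

end GKaux

namespace GKaux

noncomputable def cfun (r : ℕ) (π : ↥(Pset r) → ℕ) : ℕ → ℕ → ℕ := fun i k =>
  if h : i < r then
    if h2 : i + 2 ≤ k ∧ k ≤ r + 1 then
      π ⟨⟨⟨i, h⟩, k⟩, mem_Pset.mpr ⟨h2.1, h2.2⟩⟩
    else 0
  else 0

noncomputable def tabEquiv (r : ℕ) : TabA r ≃ (↥(Pset r) → ℕ) where
  toFun T p := ellA r T p.1.1 p.1.2
  invFun π := mkTab r (cfun r π)
  left_inv T := by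
    apply mkTab_eq
    intro i k h2 h3
    rw [cfun]
    rw [dif_pos i.isLt, dif_pos ⟨h2, h3⟩]
  right_inv π := by
    funext p
    obtain ⟨⟨i, k⟩, hp⟩ := p
    have hm := mem_Pset.mp hp
    show ellA r (mkTab r (cfun r π)) i k = π ⟨⟨i, k⟩, hp⟩
    rw [ell_mkTab r _ i k hm.1 hm.2, cfun, dif_pos i.isLt, dif_pos ⟨hm.1, hm.2⟩]

lemma segA_eq (r : ℕ) (T : TabA r) :
    segA r T = (Finset.univ.filter fun p : ↥(Pset r) => ellA r T p.1.1 p.1.2 ≠ 0).card := by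
  calc segA r T
      = ∑ i : Fin r, ∑ k ∈ Finset.Icc (i.1 + 2) (r + 1),
          if ellA r T i k ≠ 0 then 1 else 0 := by
        rw [segA]
        exact Finset.sum_congr rfl fun i _ => Finset.card_filter _ _
    _ = ∑ p ∈ Pset r, (if ellA r T p.1 p.2 ≠ 0 then 1 else 0) := by
        rw [Pset, Finset.sum_sigma]
    _ = ∑ p : ↥(Pset r), (if ellA r T p.1.1 p.1.2 ≠ 0 then 1 else 0) := by
        rw [Finset.sum_coe_sort (Pset r) (fun p => if ellA r T p.1 p.2 ≠ 0 then 1 else 0)]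
    _ = (Finset.univ.filter fun p : ↥(Pset r) => ellA r T p.1.1 p.1.2 ≠ 0).card := by
        rw [Finset.card_filter]

lemma negwtA_eq (r : ℕ) (T : TabA r) :
    negwtA r T = ∑ p : ↥(Pset r), ellA r T p.1.1 p.1.2 • beta' r p.1 := by
  rw [Finset.sum_coe_sort (Pset r) (fun p => ellA r T p.1 p.2 • beta' r p),
    Pset, Finset.sum_sigma]
  rfl

end GKaux

/-- the Gindikin–Karpelevich formula as a sum over the marginally
large tableaux `𝒯(∞)` of type `A_r`, stated coefficientwise in
`ℤ[[t, z_1, …, z_r]]`. -/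
theorem stmt2 (r : ℕ) (hr : 1 ≤ r) :
    ∀ e : Option (Fin r) →₀ ℕ,
      MvPowerSeries.coeff (R := ℤ) e
        (∏ v ∈ posRootsA r, (1 - tvar r * zmon r v) *
          MvPowerSeries.invOfUnit (1 - zmon r v) 1)
      = ∑' T : TabA r,
          MvPowerSeries.coeff (R := ℤ) e
            ((1 - tvar r) ^ segA r T * zmon r (negwtA r T)) := by
  intro e
  classical
  set N : ℕ := GKaux.W r e with hN
  set f : (↥(GKaux.Pset r) → ℕ) → ℤ := fun π =>
    MvPowerSeries.coeff e
      ((1 - tvar r) ^ (Finset.univ.filter fun p : ↥(GKaux.Pset r) => π p ≠ 0).card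
        * zmon r (∑ p : ↥(GKaux.Pset r), π p • GKaux.beta' r p.1)) with hf
  have hterm : ∀ π : ↥(GKaux.Pset r) → ℕ,
      (∏ p : ↥(GKaux.Pset r), GKaux.gterm r (GKaux.beta' r p.1) (π p))
        = (1 - tvar r) ^ (Finset.univ.filter fun p : ↥(GKaux.Pset r) => π p ≠ 0).card
          * zmon r (∑ p : ↥(GKaux.Pset r), π p • GKaux.beta' r p.1) := by
    intro π
    simp only [GKaux.gterm]
    rw [Finset.prod_mul_distrib]
    congr 1
    · rw [Finset.prod_pow_eq_pow_sum]
      congr 1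
      rw [Finset.card_filter]
      refine Finset.sum_congr rfl fun p _ => ?_
      by_cases h : π p = 0 <;> simp [h]
    · exact GKaux.zmon_sum r Finset.univ fun p => π p • GKaux.beta' r p.1
  have hsum_w : ∀ π : ↥(GKaux.Pset r) → ℕ,
      ∑ j, (∑ p : ↥(GKaux.Pset r), π p • GKaux.beta' r p.1) j
        = ∑ p : ↥(GKaux.Pset r), π p * ∑ j, GKaux.beta' r p.1 j := by
    intro π
    simp only [Finset.sum_apply, Pi.smul_apply, smul_eq_mul]
    rw [Finset.sum_comm]
    exact Finset.sum_congr rfl fun p _ => by rw [Finset.mul_sum]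
  -- LHS
  rw [GKaux.posRoots_eq r, Finset.prod_image GKaux.beta'_inj,
    ← Finset.prod_coe_sort (GKaux.Pset r)]
  have hrel : GKaux.Rel r N
      (∏ p : ↥(GKaux.Pset r), ((1 - tvar r * zmon r (GKaux.beta' r p.1)) *
        MvPowerSeries.invOfUnit (1 - zmon r (GKaux.beta' r p.1)) 1))
      (∏ p : ↥(GKaux.Pset r), GKaux.Strunc r N (GKaux.beta' r p.1)) :=
    GKaux.Rel.prod _ _ _ fun p _ => GKaux.rel_F_Strunc (GKaux.beta'_pos p.2) N
  rw [hrel e (le_refl N)]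
  have hexp : (∏ p : ↥(GKaux.Pset r), GKaux.Strunc r N (GKaux.beta' r p.1))
      = ∑ π ∈ Fintype.piFinset (fun _ : ↥(GKaux.Pset r) => Finset.range (N + 1)),
          ∏ p : ↥(GKaux.Pset r), GKaux.gterm r (GKaux.beta' r p.1) (π p) := by
    simp only [GKaux.Strunc]
    exact Finset.prod_univ_sum _ _
  rw [hexp, map_sum]
  have hL : ∑ π ∈ Fintype.piFinset (fun _ : ↥(GKaux.Pset r) => Finset.range (N + 1)),
      MvPowerSeries.coeff e (∏ p : ↥(GKaux.Pset r), GKaux.gterm r (GKaux.beta' r p.1) (π p))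
      = ∑ π ∈ Fintype.piFinset (fun _ : ↥(GKaux.Pset r) => Finset.range (N + 1)), f π :=
    Finset.sum_congr rfl fun π _ => by rw [hterm π, hf]
  rw [hL]
  -- RHS
  have htsum : (∑' T : TabA r, MvPowerSeries.coeff e
        ((1 - tvar r) ^ segA r T * zmon r (negwtA r T)))
      = ∑' π : ↥(GKaux.Pset r) → ℕ, f π := by
    rw [← Equiv.tsum_eq (GKaux.tabEquiv r) f]
    refine tsum_congr fun T => ?_
    rw [hf]
    rw [GKaux.segA_eq, GKaux.negwtA_eq]
    rfl
  rw [htsum]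
  -- tsum to finite sum
  rw [tsum_eq_sum (s := Fintype.piFinset (fun _ : ↥(GKaux.Pset r) => Finset.range (N + 1)))]
  intro π hπ
  rw [Fintype.mem_piFinset] at hπ
  push_neg at hπ
  obtain ⟨p0, hp0⟩ := hπ
  rw [Finset.mem_range, not_lt] at hp0
  rw [hf]
  simp only
  rw [mul_comm]
  apply GKaux.coeff_zmon_mul_eq_zero
  rw [hsum_w π]
  have h2 : π p0 * ∑ j, GKaux.beta' r p0.1 j
      ≤ ∑ p : ↥(GKaux.Pset r), π p * ∑ j, GKaux.beta' r p.1 j :=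
    Finset.single_le_sum (f := fun p : ↥(GKaux.Pset r) => π p * ∑ j, GKaux.beta' r p.1 j)
      (fun p _ => Nat.zero_le _) (Finset.mem_univ p0)
  have h3 := GKaux.beta'_pos p0.2
  have h4 : N + 1 ≤ π p0 * ∑ j, GKaux.beta' r p0.1 j := by
    calc N + 1 ≤ π p0 := hp0
      _ = π p0 * 1 := (Nat.mul_one _).symm
      _ ≤ π p0 * ∑ j, GKaux.beta' r p0.1 j := Nat.mul_le_mul_left _ h3
  exact lt_of_lt_of_le (Nat.lt_succ_self N) (le_trans h4 h2)
end

section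
/- The map Ξ is a bijection from 𝒯(∞) onto the set of all functions from the positive roots {β_{i,k} : 1 ≤ i ≤ k ≤ r} ∪ {γ_{i,k} : 1 ≤ i < k ≤ r} of B_r to the nonnegative integers. Moreover, for every T ∈ 𝒯(∞), seg(T) = seg′(T) − e_B(T) equals the number of positive roots α with Ξ(T)(α) ≠ 0. -/
/-- Marginally large semistandard Young tableaux of type `B_r`, on the totally
ordered alphabet `{1 ≺ ⋯ ≺ r ≺ 0 ≺ r̄ ≺ ⋯ ≺ 1̄}`, encoded by the order
isomorphism onto `{1, …, 2r+1} ⊂ ℕ` sending `k ↦ k`, `0 ↦ r+1`, `k̄ ↦ 2r+2-k`.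
Conditions: exactly `r` rows, rows weakly increasing, columns strictly
increasing, first column `1, …, r`, every entry of row `i` is `≼ ī`, the entry
`0` occurs at most once in each row, and the number of `i`-entries in row `i`
exceeds the number of boxes in row `i+1` by exactly one. -/
structure TabB (r : ℕ) where
  row : Fin r → List ℕ
  entry_mem : ∀ i : Fin r, ∀ e ∈ row i, 1 ≤ e ∧ e ≤ 2 * r + 1
  row_weak : ∀ i : Fin r, (row i).Chain' (· ≤ ·)
  first_col : ∀ i : Fin r, (row i).head? = some (i.1 + 1)
  row_bound : ∀ i : Fin r, ∀ e ∈ row i, e ≤ 2 * r + 1 - i.1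
  zero_once : ∀ i : Fin r, (row i).count (r + 1) ≤ 1
  col_le : ∀ i : Fin r, ∀ h : i.1 + 1 < r,
    (row ⟨i.1 + 1, h⟩).length ≤ (row i).length
  col_strict : ∀ i : Fin r, ∀ h : i.1 + 1 < r, ∀ j < (row ⟨i.1 + 1, h⟩).length,
    (row i).getD j 0 < (row ⟨i.1 + 1, h⟩).getD j 0
  marg_large : ∀ i : Fin r, (row i).count (i.1 + 1) =
    (if h : i.1 + 1 < r then (row ⟨i.1 + 1, h⟩).length else 0) + 1

/-- `ℓ_{i,x}(T)`: the number of entries with code `x` in row `i` (row `i : Fin r`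
has label `i+1`; the symbol `0` has code `r+1` and `k̄` has code `2r+2-k`). -/
def ellB (r : ℕ) (T : TabB r) (i : Fin r) (x : ℕ) : ℕ := (T.row i).count x

/-- `seg′(T)`: the number of pairs `(i,x)` with `x ≻ i` and `ℓ_{i,x}(T) > 0`. -/
def segB' (r : ℕ) (T : TabB r) : ℕ :=
  ∑ i : Fin r, ((Finset.Icc (i.1 + 2) (2 * r + 1)).filter fun x => ellB r T i x ≠ 0).card

/-- `e_B(T)`: the number of rows `i` containing both a `0`-segment and an
`ī`-segment. -/
def eB (r : ℕ) (T : TabB r) : ℕ :=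
  (Finset.univ.filter fun i : Fin r =>
    ellB r T i (r + 1) ≠ 0 ∧ ellB r T i (2 * r + 1 - i.1) ≠ 0).card

/-- `seg(T) = seg′(T) - e_B(T)`. -/
def segB (r : ℕ) (T : TabB r) : ℕ := segB' r T - eB r T

/-- The positive root `β_{i,k} = α_i + ⋯ + α_k` of `B_r` (`1 ≤ i ≤ k ≤ r`), in
simple-root coordinates. -/
def betaB (r : ℕ) (i k : ℕ) : Fin r → ℕ :=
  fun j => if i ≤ j.1 + 1 ∧ j.1 + 1 ≤ k then 1 else 0

/-- The positive root `γ_{i,k} = α_i + ⋯ + α_{k-1} + 2α_k + ⋯ + 2α_r` of `B_r`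
(`1 ≤ i < k ≤ r`), in simple-root coordinates. -/
def gammaB (r : ℕ) (i k : ℕ) : Fin r → ℕ :=
  fun j => if i ≤ j.1 + 1 ∧ j.1 + 1 ≤ k - 1 then 1 else if k ≤ j.1 + 1 then 2 else 0

/-- The set of positive roots of `B_r`. -/
def posRootsB (r : ℕ) : Finset (Fin r → ℕ) :=
  ((Finset.Icc 1 r ×ˢ Finset.Icc 1 r).filter fun p => p.1 ≤ p.2).image
      (fun p => betaB r p.1 p.2) ∪
    ((Finset.Icc 1 r ×ˢ Finset.Icc 1 r).filter fun p => p.1 < p.2).image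
      (fun p => gammaB r p.1 p.2)

/-- `Ξ(T)`, extended by zero to all vectors: `Ξ(T)(β_{i,k-1}) = ℓ_{i,k}(T)` for
`i < k ≤ r`, `Ξ(T)(β_{i,r}) = 2ℓ_{i,ī}(T) + ℓ_{i,0}(T)`, and
`Ξ(T)(γ_{i,k}) = ℓ_{i,k̄}(T)` for `i < k ≤ r`. -/
def XiB (r : ℕ) (T : TabB r) (v : Fin r → ℕ) : ℕ :=
  ∑ i : Fin r,
    ((∑ k ∈ Finset.Icc (i.1 + 2) r,
        if v = betaB r (i.1 + 1) (k - 1) then ellB r T i k else 0) +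
      (if v = betaB r (i.1 + 1) r then
        2 * ellB r T i (2 * r + 1 - i.1) + ellB r T i (r + 1) else 0) +
      (∑ k ∈ Finset.Icc (i.1 + 2) r,
        if v = gammaB r (i.1 + 1) k then ellB r T i (2 * r + 2 - k) else 0))

/-- `-wt(T) = Σ_α Ξ(T)(α)·α`, in simple-root coordinates. -/
def negwtB (r : ℕ) (T : TabB r) : Fin r → ℕ :=
  ∑ v ∈ posRootsB r, XiB r T v • v



/-- A run of blocks: entries `x ∈ [s, s+n)`, each with multiplicity `c x`, in order. -/
def blocksB (c : ℕ → ℕ) (s n : ℕ) : List ℕ :=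
  (List.range' s n).flatMap fun x => List.replicate (c x) x

lemma blocksB_succ (c : ℕ → ℕ) (s n : ℕ) :
    blocksB c s (n + 1) = List.replicate (c s) s ++ blocksB c (s + 1) n := by
  simp [blocksB, List.range'_succ]

lemma mem_blocksB {c : ℕ → ℕ} {s n e : ℕ} (h : e ∈ blocksB c s n) :
    s ≤ e ∧ e < s + n := by
  rw [blocksB, List.mem_flatMap] at h
  obtain ⟨a, ha, he⟩ := h
  rw [List.mem_range'_1] at ha
  rcases List.eq_of_mem_replicate he with rfl
  omega

lemma count_blocksB (c : ℕ → ℕ) (s n x : ℕ) :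
    (blocksB c s n).count x = if s ≤ x ∧ x < s + n then c x else 0 := by
  induction n generalizing s with
  | zero => rw [if_neg (by omega)]; simp [blocksB]
  | succ n ih =>
    rw [blocksB_succ, List.count_append, ih, List.count_replicate]
    by_cases hx : x = s
    · subst hx
      rw [if_pos (by simp), if_neg (by omega), if_pos (by omega)]; omega
    · rw [if_neg (by simp; omega)]
      split_ifs <;> omega

lemma sorted_blocksB (c : ℕ → ℕ) (s n : ℕ) :
    (blocksB c s n).Pairwise (· ≤ ·) := by
  induction n generalizing s with
  | zero => simp [blocksB]
  | succ n ih =>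
    rw [blocksB_succ, List.pairwise_append]
    refine ⟨?_, ih (s+1), ?_⟩
    · rw [List.pairwise_replicate]
      right; exact le_refl s
    · intro a ha b hb
      rcases List.eq_of_mem_replicate ha with rfl
      have := (mem_blocksB hb).1
      omega

/-- Canonical rows built from a count function `g`. -/
def rowsOf (r : ℕ) (g : ℕ → ℕ → ℕ) (i : ℕ) : List ℕ :=
  if h : i < r then
    List.replicate ((rowsOf r g (i+1)).length + 1) (i+1)
      ++ blocksB (g i) (i+2) (2*r - 2*i)
  else []
termination_by r - i
decreasing_by omega

lemma rowsOf_pos {r i : ℕ} (g : ℕ → ℕ → ℕ) (h : i < r) :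
    rowsOf r g i = List.replicate ((rowsOf r g (i+1)).length + 1) (i+1)
      ++ blocksB (g i) (i+2) (2*r - 2*i) := by
  rw [rowsOf, dif_pos h]

lemma rowsOf_neg {r i : ℕ} (g : ℕ → ℕ → ℕ) (h : ¬ i < r) : rowsOf r g i = [] := by
  rw [rowsOf, dif_neg h]

lemma count_rowsOf {r i : ℕ} (g : ℕ → ℕ → ℕ) (h : i < r) (x : ℕ) :
    (rowsOf r g i).count x =
      (if x = i+1 then (rowsOf r g (i+1)).length + 1 else 0) +
      (if i+2 ≤ x ∧ x ≤ 2*r+1-i then g i x else 0) := by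
  rw [rowsOf_pos g h, List.count_append, List.count_replicate, count_blocksB]
  simp only [beq_iff_eq]
  split_ifs <;> omega

lemma mem_rowsOf {r i e : ℕ} {g : ℕ → ℕ → ℕ} (h : i < r) (he : e ∈ rowsOf r g i) :
    i+1 ≤ e ∧ e ≤ 2*r+1-i := by
  rw [rowsOf_pos g h, List.mem_append] at he
  rcases he with he | he
  · rcases List.eq_of_mem_replicate he with rfl; omega
  · have := mem_blocksB he; omega

lemma sorted_rowsOf {r i : ℕ} (g : ℕ → ℕ → ℕ) :
    (rowsOf r g i).Pairwise (· ≤ ·) := by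
  by_cases h : i < r
  · rw [rowsOf_pos g h, List.pairwise_append]
    refine ⟨?_, sorted_blocksB _ _ _, ?_⟩
    · rw [List.pairwise_replicate]; right; exact le_refl _
    · intro a ha b hb
      rcases List.eq_of_mem_replicate ha with rfl
      have := (mem_blocksB hb).1; omega
  · rw [rowsOf_neg g h]; simp

lemma head?_rowsOf {r i : ℕ} (g : ℕ → ℕ → ℕ) (h : i < r) :
    (rowsOf r g i).head? = some (i+1) := by
  rw [rowsOf_pos g h, List.head?_append, List.replicate_succ]
  simp

lemma getD_rowsOf {r i j : ℕ} (g : ℕ → ℕ → ℕ) (h : i < r)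
    (hj : j < (rowsOf r g (i+1)).length + 1) : (rowsOf r g i).getD j 0 = i + 1 := by
  rw [rowsOf_pos g h, List.getD_append _ _ _ _ (by simpa using hj)]
  rw [List.getD_eq_getElem _ _ (by simpa using hj), List.getElem_replicate]

/-- The canonical tableau built from a count function. -/
def tabOf (r : ℕ) (g : ℕ → ℕ → ℕ) (hg : ∀ i, g i (r+1) ≤ 1) : TabB r where
  row i := rowsOf r g i.1
  entry_mem i e he := by have := mem_rowsOf i.2 he; have := i.2; omega
  row_weak i := List.isChain_iff_pairwise.mpr (sorted_rowsOf g)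
  first_col i := head?_rowsOf g i.2
  row_bound i e he := (mem_rowsOf i.2 he).2
  zero_once i := by
    rw [count_rowsOf g i.2, if_neg (by have := i.2; omega)]
    have := hg i.1
    split_ifs <;> omega
  col_le i h := by
    show (rowsOf r g (i.1+1)).length ≤ (rowsOf r g i.1).length
    rw [rowsOf_pos g i.2, List.length_append, List.length_replicate]
    omega
  col_strict i h j hj := by
    show (rowsOf r g i.1).getD j 0 < (rowsOf r g (i.1+1)).getD j 0
    replace hj : j < (rowsOf r g (i.1+1)).length := hj
    have h1 : (rowsOf r g (i.1+1)).getD j 0 = (rowsOf r g (i.1+1))[j] :=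
      List.getD_eq_getElem _ _ hj
    have h2 : (rowsOf r g (i.1+1))[j] ∈ rowsOf r g (i.1+1) := List.getElem_mem _
    have h3 := (mem_rowsOf h h2).1
    rw [getD_rowsOf g i.2 (by omega), h1]
    omega
  marg_large i := by
    rw [count_rowsOf g i.2, if_pos rfl, if_neg (by omega)]
    split_ifs with h
    · rfl
    · rw [rowsOf_neg g (by omega)]; rfl

lemma ellB_tabOf (r : ℕ) (g : ℕ → ℕ → ℕ) (hg : ∀ i, g i (r+1) ≤ 1)
    (i : Fin r) (x : ℕ) (hx : i.1 + 2 ≤ x) (hx2 : x ≤ 2*r+1-i.1) :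
    ellB r (tabOf r g hg) i x = g i.1 x := by
  show (rowsOf r g i.1).count x = _
  rw [count_rowsOf g i.2, if_neg (by omega), if_pos ⟨hx, hx2⟩]
  omega

lemma add3_eqB {A B C A' B' C' : ℕ} (hA : A = A') (hB : B = B') (hC : C = C') :
    A + B + C = A' + B' + C' := by rw [hA, hB, hC]

lemma betaB_inj {r a b a' b' : ℕ} (ha : 1 ≤ a) (hab : a ≤ b) (hbr : b ≤ r)
    (ha' : 1 ≤ a') (hab' : a' ≤ b') (hbr' : b' ≤ r)
    (h : betaB r a b = betaB r a' b') : a = a' ∧ b = b' := by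
  have h1 := congrFun h ⟨a-1, by omega⟩
  have h2 := congrFun h ⟨a'-1, by omega⟩
  have h3 := congrFun h ⟨b-1, by omega⟩
  have h4 := congrFun h ⟨b'-1, by omega⟩
  simp only [betaB] at h1 h2 h3 h4
  split_ifs at h1 h2 h3 h4 <;> omega

set_option maxHeartbeats 1600000 in
lemma gammaB_inj {r a b a' b' : ℕ} (ha : 1 ≤ a) (hab : a < b) (hbr : b ≤ r)
    (ha' : 1 ≤ a') (hab' : a' < b') (hbr' : b' ≤ r)
    (h : gammaB r a b = gammaB r a' b') : a = a' ∧ b = b' := by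
  have h1 := congrFun h ⟨a-1, by omega⟩
  have h2 := congrFun h ⟨a'-1, by omega⟩
  have h3 := congrFun h ⟨b-1, by omega⟩
  have h4 := congrFun h ⟨b'-1, by omega⟩
  simp only [gammaB] at h1 h2 h3 h4
  split_ifs at h1 h2 h3 h4 <;> omega

lemma betaB_ne_gammaB {r a b a' b' : ℕ} (hr : 1 ≤ r) (ha' : 1 ≤ a') (hab' : a' < b') (hbr' : b' ≤ r) :
    betaB r a b ≠ gammaB r a' b' := by
  intro h
  have h1 := congrFun h ⟨r-1, by omega⟩
  simp only [betaB, gammaB] at h1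
  split_ifs at h1 <;> omega

lemma betaB_mem {r a b : ℕ} (ha : 1 ≤ a) (hab : a ≤ b) (hbr : b ≤ r) :
    betaB r a b ∈ posRootsB r := by
  apply Finset.mem_union_left
  exact Finset.mem_image.mpr ⟨(a, b), by
    simp only [Finset.mem_filter, Finset.mem_product, Finset.mem_Icc]
    omega, rfl⟩

lemma gammaB_mem {r a b : ℕ} (ha : 1 ≤ a) (hab : a < b) (hbr : b ≤ r) :
    gammaB r a b ∈ posRootsB r := by
  apply Finset.mem_union_right
  exact Finset.mem_image.mpr ⟨(a, b), by
    simp only [Finset.mem_filter, Finset.mem_product, Finset.mem_Icc]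
    omega, rfl⟩

lemma XiB_beta_lt (r : ℕ) (T : TabB r) (i : Fin r) (k : ℕ) (hk1 : i.1+2 ≤ k) (hk2 : k ≤ r) :
    XiB r T (betaB r (i.1+1) (k-1)) = ellB r T i k := by
  have hir : i.1 < r := i.2
  rw [XiB]
  refine Eq.trans (Finset.sum_eq_single i ?_ ?_) ?_
  · intro j _ hji
    have hjr : j.1 < r := j.2
    refine Eq.trans (add3_eqB ?_ ?_ ?_) (by omega : (0:ℕ) + 0 + 0 = 0)
    · refine Finset.sum_eq_zero fun m hm => ?_
      rw [Finset.mem_Icc] at hm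
      refine if_neg fun hc => ?_
      have := (betaB_inj (by omega) (by omega) (by omega) (by omega) (by omega) (by omega) hc).1
      exact hji (Fin.ext (by omega))
    · refine if_neg fun hc => ?_
      have := (betaB_inj (by omega) (by omega) (by omega) (by omega) (by omega) (by omega) hc).2
      omega
    · refine Finset.sum_eq_zero fun m hm => ?_
      rw [Finset.mem_Icc] at hm
      exact if_neg (betaB_ne_gammaB (by omega) (by omega) (by omega) (by omega))
  · exact fun hi => absurd (Finset.mem_univ i) hi
  · refine Eq.trans (add3_eqB ?_ ?_ ?_) (by omega : ellB r T i k + 0 + 0 = ellB r T i k)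
    · refine Eq.trans (Finset.sum_eq_single k ?_ ?_) (if_pos rfl)
      · intro m hm hmk
        rw [Finset.mem_Icc] at hm
        refine if_neg fun hc => ?_
        have := (betaB_inj (by omega) (by omega) (by omega) (by omega) (by omega) (by omega) hc).2
        omega
      · exact fun hk => absurd (Finset.mem_Icc.mpr ⟨hk1, hk2⟩) hk
    · refine if_neg fun hc => ?_
      have := (betaB_inj (by omega) (by omega) (by omega) (by omega) (by omega) (by omega) hc).2
      omega
    · refine Finset.sum_eq_zero fun m hm => ?_
      rw [Finset.mem_Icc] at hm
      exact if_neg (betaB_ne_gammaB (by omega) (by omega) (by omega) (by omega))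

lemma XiB_beta_r (r : ℕ) (T : TabB r) (i : Fin r) :
    XiB r T (betaB r (i.1+1) r) =
      2 * ellB r T i (2 * r + 1 - i.1) + ellB r T i (r + 1) := by
  have hir : i.1 < r := i.2
  rw [XiB]
  refine Eq.trans (Finset.sum_eq_single i ?_ ?_) ?_
  · intro j _ hji
    have hjr : j.1 < r := j.2
    refine Eq.trans (add3_eqB ?_ ?_ ?_) (by omega : (0:ℕ) + 0 + 0 = 0)
    · refine Finset.sum_eq_zero fun m hm => ?_
      rw [Finset.mem_Icc] at hm
      refine if_neg fun hc => ?_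
      have := (betaB_inj (by omega) (by omega) (by omega) (by omega) (by omega) (by omega) hc).1
      exact hji (Fin.ext (by omega))
    · refine if_neg fun hc => ?_
      have := (betaB_inj (by omega) (by omega) (by omega) (by omega) (by omega) (by omega) hc).1
      exact hji (Fin.ext (by omega))
    · refine Finset.sum_eq_zero fun m hm => ?_
      rw [Finset.mem_Icc] at hm
      exact if_neg (betaB_ne_gammaB (by omega) (by omega) (by omega) (by omega))
  · exact fun hi => absurd (Finset.mem_univ i) hi
  · refine Eq.trans (add3_eqB ?_ (if_pos rfl) ?_)
      (by omega : 0 + (2 * ellB r T i (2 * r + 1 - i.1) + ellB r T i (r + 1)) + 0 = _)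
    · refine Finset.sum_eq_zero fun m hm => ?_
      rw [Finset.mem_Icc] at hm
      refine if_neg fun hc => ?_
      have := (betaB_inj (by omega) (by omega) (by omega) (by omega) (by omega) (by omega) hc).2
      omega
    · refine Finset.sum_eq_zero fun m hm => ?_
      rw [Finset.mem_Icc] at hm
      exact if_neg (betaB_ne_gammaB (by omega) (by omega) (by omega) (by omega))

lemma XiB_gamma (r : ℕ) (T : TabB r) (i : Fin r) (k : ℕ) (hk1 : i.1+2 ≤ k) (hk2 : k ≤ r) :
    XiB r T (gammaB r (i.1+1) k) = ellB r T i (2 * r + 2 - k) := by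
  have hir : i.1 < r := i.2
  rw [XiB]
  refine Eq.trans (Finset.sum_eq_single i ?_ ?_) ?_
  · intro j _ hji
    have hjr : j.1 < r := j.2
    refine Eq.trans (add3_eqB ?_ ?_ ?_) (by omega : (0:ℕ) + 0 + 0 = 0)
    · refine Finset.sum_eq_zero fun m hm => ?_
      rw [Finset.mem_Icc] at hm
      exact if_neg fun hc =>
        betaB_ne_gammaB (by omega) (by omega) (by omega) (by omega) hc.symm
    · exact if_neg fun hc =>
        betaB_ne_gammaB (by omega) (by omega) (by omega) (by omega) hc.symm
    · refine Finset.sum_eq_zero fun m hm => ?_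
      rw [Finset.mem_Icc] at hm
      refine if_neg fun hc => ?_
      have := (gammaB_inj (by omega) (by omega) (by omega) (by omega) (by omega) (by omega) hc).1
      exact hji (Fin.ext (by omega))
  · exact fun hi => absurd (Finset.mem_univ i) hi
  · refine Eq.trans (add3_eqB ?_ ?_ ?_) (by omega : 0 + 0 + ellB r T i (2*r+2-k) = _)
    · refine Finset.sum_eq_zero fun m hm => ?_
      rw [Finset.mem_Icc] at hm
      exact if_neg fun hc =>
        betaB_ne_gammaB (by omega) (by omega) (by omega) (by omega) hc.symm
    · exact if_neg fun hc =>
        betaB_ne_gammaB (by omega) (by omega) (by omega) (by omega) hc.symm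
    · refine Eq.trans (Finset.sum_eq_single k ?_ ?_) (if_pos rfl)
      · intro m hm hmk
        rw [Finset.mem_Icc] at hm
        refine if_neg fun hc => ?_
        have := (gammaB_inj (by omega) (by omega) (by omega) (by omega) (by omega) (by omega) hc).2
        omega
      · exact fun hk => absurd (Finset.mem_Icc.mpr ⟨hk1, hk2⟩) hk

lemma row_geB {r : ℕ} (T : TabB r) (i : Fin r) : ∀ e ∈ T.row i, i.1 + 1 ≤ e := by
  have h1 := T.first_col i
  have h2 := List.isChain_iff_pairwise.mp (T.row_weak i)
  cases hrow : T.row i with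
  | nil => simp
  | cons hd tl =>
    rw [hrow] at h1 h2
    simp only [List.head?_cons, Option.some.injEq] at h1
    intro e he
    rcases List.mem_cons.mp he with rfl | he
    · omega
    · have := (List.pairwise_cons.mp h2).1 e he
      omega

lemma TabB_ext {r : ℕ} {T T' : TabB r} (h : T.row = T'.row) : T = T' := by
  cases T; cases T'; cases h; rfl

lemma row_extB {r : ℕ} (T T' : TabB r) (i : Fin r)
    (hlen : (if h : i.1+1 < r then (T.row ⟨i.1+1, h⟩).length else 0) =
      (if h : i.1+1 < r then (T'.row ⟨i.1+1, h⟩).length else 0))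
    (hc : ∀ x, i.1+2 ≤ x → (T.row i).count x = (T'.row i).count x) :
    T.row i = T'.row i := by
  refine (fun hp h1 h2 => List.Perm.eq_of_pairwise' h1 h2 hp) (List.perm_iff_count.mpr fun a => ?_)
    (List.isChain_iff_pairwise.mp (T.row_weak i))
    (List.isChain_iff_pairwise.mp (T'.row_weak i))
  rcases lt_trichotomy a (i.1+1) with hlt | heq | hgt
  · rw [List.count_eq_zero.mpr (fun hm => by have := row_geB T i a hm; omega),
      List.count_eq_zero.mpr (fun hm => by have := row_geB T' i a hm; omega)]
  · subst heq
    rw [T.marg_large i, T'.marg_large i, hlen]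
  · exact hc a (by omega)

lemma tab_eq_of_count_eq {r : ℕ} (T T' : TabB r)
    (hc : ∀ i : Fin r, ∀ x, i.1+2 ≤ x → (T.row i).count x = (T'.row i).count x) :
    T = T' := by
  have key : ∀ n, ∀ i : Fin r, r - i.1 = n + 1 → T.row i = T'.row i := by
    intro n
    induction n with
    | zero =>
      intro i hi
      exact row_extB T T' i (by rw [dif_neg (by omega), dif_neg (by omega)]) (hc i)
    | succ n ih =>
      intro i hi
      refine row_extB T T' i ?_ (hc i)
      have hnext : i.1 + 1 < r := by omega
      rw [dif_pos hnext, dif_pos hnext, ih ⟨i.1+1, hnext⟩ (by simp; omega)]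
  refine TabB_ext (funext fun i => key (r - i.1 - 1) i (by have := i.2; omega))

lemma XiB_injectiveB (r : ℕ) (hr : 1 ≤ r) :
    Function.Injective
      (fun (T : TabB r) (α : {v // v ∈ posRootsB r}) => XiB r T α.1) := by
  intro T T' h
  have hv : ∀ v, v ∈ posRootsB r → XiB r T v = XiB r T' v :=
    fun v hm => congrFun h ⟨v, hm⟩
  apply tab_eq_of_count_eq
  intro i x hx
  have hir : i.1 < r := i.2
  by_cases h1 : x ≤ r
  · have hh := hv (betaB r (i.1+1) (x-1)) (betaB_mem (by omega) (by omega) (by omega))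
    rwa [XiB_beta_lt r T i x hx h1, XiB_beta_lt r T' i x hx h1] at hh
  by_cases h2 : x = r + 1 ∨ x = 2*r+1-i.1
  · have hh := hv (betaB r (i.1+1) r) (betaB_mem (by omega) (by omega) (le_refl r))
    rw [XiB_beta_r r T i, XiB_beta_r r T' i] at hh
    have z1 := T.zero_once i
    have z2 := T'.zero_once i
    simp only [ellB] at hh
    rcases h2 with rfl | rfl
    · omega
    · omega
  by_cases h3 : x ≤ 2*r - i.1
  · have hh := hv (gammaB r (i.1+1) (2*r+2-x)) (gammaB_mem (by omega) (by omega) (by omega))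
    rw [XiB_gamma r T i (2*r+2-x) (by omega) (by omega),
      XiB_gamma r T' i (2*r+2-x) (by omega) (by omega)] at hh
    have e : 2*r+2-(2*r+2-x) = x := by omega
    rw [e] at hh
    exact hh
  · rw [List.count_eq_zero.mpr (fun hm => by have := T.row_bound i x hm; omega),
      List.count_eq_zero.mpr (fun hm => by have := T'.row_bound i x hm; omega)]

/-- Count function read off from a prospective `Ξ`-value `F`. -/
def gOfB (r : ℕ) (F : (Fin r → ℕ) → ℕ) : ℕ → ℕ → ℕ := fun i x =>
  if i < r ∧ i + 2 ≤ x ∧ x ≤ 2*r+1-i then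
    (if x ≤ r then F (betaB r (i+1) (x-1))
     else if x = r+1 then F (betaB r (i+1) r) % 2
     else if x = 2*r+1-i then F (betaB r (i+1) r) / 2
     else F (gammaB r (i+1) (2*r+2-x)))
  else 0

lemma gOfB_le (r : ℕ) (F : (Fin r → ℕ) → ℕ) : ∀ i, gOfB r F i (r+1) ≤ 1 := by
  intro i
  rw [gOfB]
  split_ifs <;> omega

lemma gOfB_beta_lt (r : ℕ) (F : (Fin r → ℕ) → ℕ) (i : Fin r) (k : ℕ)
    (hk1 : i.1+2 ≤ k) (hk2 : k ≤ r) :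
    gOfB r F i.1 k = F (betaB r (i.1+1) (k-1)) := by
  have hir : i.1 < r := i.2
  rw [gOfB, if_pos (by omega), if_pos hk2]

lemma gOfB_zero (r : ℕ) (F : (Fin r → ℕ) → ℕ) (i : Fin r) :
    gOfB r F i.1 (r+1) = F (betaB r (i.1+1) r) % 2 := by
  have hir : i.1 < r := i.2
  rw [gOfB, if_pos (by omega), if_neg (by omega), if_pos rfl]

lemma gOfB_bar (r : ℕ) (F : (Fin r → ℕ) → ℕ) (i : Fin r) :
    gOfB r F i.1 (2*r+1-i.1) = F (betaB r (i.1+1) r) / 2 := by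
  have hir : i.1 < r := i.2
  rw [gOfB, if_pos (by omega), if_neg (by omega), if_neg (by omega), if_pos rfl]

lemma gOfB_gamma (r : ℕ) (F : (Fin r → ℕ) → ℕ) (i : Fin r) (k : ℕ)
    (hk1 : i.1+2 ≤ k) (hk2 : k ≤ r) :
    gOfB r F i.1 (2*r+2-k) = F (gammaB r (i.1+1) k) := by
  have hir : i.1 < r := i.2
  rw [gOfB, if_pos (by omega), if_neg (by omega), if_neg (by omega), if_neg (by omega)]
  have e : 2*r+2-(2*r+2-k) = k := by omega
  rw [e]

lemma XiB_surjectiveB (r : ℕ) (hr : 1 ≤ r) :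
    Function.Surjective
      (fun (T : TabB r) (α : {v // v ∈ posRootsB r}) => XiB r T α.1) := by
  intro f
  let F : (Fin r → ℕ) → ℕ := fun v => if h : v ∈ posRootsB r then f ⟨v, h⟩ else 0
  refine ⟨tabOf r (gOfB r F) (gOfB_le r F), funext fun α => ?_⟩
  obtain ⟨v, hv⟩ := α
  show XiB r (tabOf r (gOfB r F) (gOfB_le r F)) v = f ⟨v, hv⟩
  have hfv : f ⟨v, hv⟩ = F v := by
    show f ⟨v, hv⟩ = dite (v ∈ posRootsB r) (fun h => f ⟨v, h⟩) (fun _ => 0)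
    rw [dif_pos hv]
  rw [hfv]
  rw [posRootsB, Finset.mem_union] at hv
  rcases hv with hv | hv
  · obtain ⟨⟨a, b⟩, hab, rfl⟩ := Finset.mem_image.mp hv
    simp only [Finset.mem_filter, Finset.mem_product, Finset.mem_Icc] at hab
    set i : Fin r := ⟨a-1, by omega⟩ with hi
    have e0 : i.1 = a - 1 := rfl
    have e1 : i.1 + 1 = a := by omega
    by_cases hbr : b < r
    · have e : betaB r a b = betaB r (i.1+1) ((b+1)-1) := by
        rw [e1, Nat.add_sub_cancel]
      rw [e, XiB_beta_lt r _ i (b+1) (by omega) (by omega),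
        ellB_tabOf r _ _ i (b+1) (by omega) (by omega),
        gOfB_beta_lt r F i (b+1) (by omega) (by omega)]
    · have hbr' : b = r := by omega
      have e : betaB r a b = betaB r (i.1+1) r := by rw [e1, hbr']
      rw [e, XiB_beta_r r _ i,
        ellB_tabOf r _ _ i (2*r+1-i.1) (by omega) (by omega),
        ellB_tabOf r _ _ i (r+1) (by omega) (by omega),
        gOfB_bar r F i, gOfB_zero r F i]
      omega
  · obtain ⟨⟨a, b⟩, hab, rfl⟩ := Finset.mem_image.mp hv
    simp only [Finset.mem_filter, Finset.mem_product, Finset.mem_Icc] at hab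
    set i : Fin r := ⟨a-1, by omega⟩ with hi
    have e0 : i.1 = a - 1 := rfl
    have e1 : i.1 + 1 = a := by omega
    have e : gammaB r a b = gammaB r (i.1+1) b := by rw [e1]
    rw [e, XiB_gamma r _ i b (by omega) (by omega),
      ellB_tabOf r _ _ i (2*r+2-b) (by omega) (by omega),
      gOfB_gamma r F i b (by omega) (by omega)]

lemma betaB_congr {r a b a' b' : ℕ} (h1 : a = a') (h2 : b = b') :
    betaB r a b = betaB r a' b' := by rw [h1, h2]

lemma gammaB_congr {r a b a' b' : ℕ} (h1 : a = a') (h2 : b = b') :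
    gammaB r a b = gammaB r a' b' := by rw [h1, h2]

lemma rowSplitB (r : ℕ) (T : TabB r) (i : Fin r) :
    ((Finset.Icc (i.1+2) (2*r+1)).filter fun x => ellB r T i x ≠ 0).card =
      ((Finset.Icc (i.1+2) r).filter fun x => ellB r T i x ≠ 0).card +
      ((Finset.Icc (r+2) (2*r-i.1)).filter fun x => ellB r T i x ≠ 0).card +
      ((if ellB r T i (r+1) ≠ 0 then 1 else 0) +
       (if ellB r T i (2*r+1-i.1) ≠ 0 then 1 else 0)) := by
  have hir : i.1 < r := i.2
  rw [Finset.card_filter, Finset.card_filter, Finset.card_filter]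
  have c1 : Finset.Icc (i.1+2) (2*r+1) = Finset.Ico (i.1+2) (2*r+2) := by
    ext y; simp only [Finset.mem_Icc, Finset.mem_Ico]; omega
  have c2 : Finset.Icc (i.1+2) r = Finset.Ico (i.1+2) (r+1) := by
    ext y; simp only [Finset.mem_Icc, Finset.mem_Ico]; omega
  have c3 : Finset.Icc (r+2) (2*r-i.1) = Finset.Ico (r+2) (2*r+1-i.1) := by
    ext y; simp only [Finset.mem_Icc, Finset.mem_Ico]; omega
  rw [c1, c2, c3]
  rw [← Finset.sum_Ico_consecutive (fun x => if ellB r T i x ≠ 0 then 1 else 0)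
    (show i.1+2 ≤ r+1 by omega) (show r+1 ≤ 2*r+2 by omega)]
  rw [← Finset.sum_Ico_consecutive (fun x => if ellB r T i x ≠ 0 then 1 else 0)
    (show r+1 ≤ r+2 by omega) (show r+2 ≤ 2*r+2 by omega)]
  rw [← Finset.sum_Ico_consecutive (fun x => if ellB r T i x ≠ 0 then 1 else 0)
    (show r+2 ≤ 2*r+1-i.1 by omega) (show 2*r+1-i.1 ≤ 2*r+2 by omega)]
  rw [← Finset.sum_Ico_consecutive (fun x => if ellB r T i x ≠ 0 then 1 else 0)
    (show 2*r+1-i.1 ≤ 2*r+2-i.1 by omega) (show 2*r+2-i.1 ≤ 2*r+2 by omega)]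
  have s1 : Finset.Ico (r+1) (r+2) = {r+1} := by
    ext y; simp only [Finset.mem_Ico, Finset.mem_singleton]; omega
  have s2 : Finset.Ico (2*r+1-i.1) (2*r+2-i.1) = {2*r+1-i.1} := by
    ext y; simp only [Finset.mem_Ico, Finset.mem_singleton]; omega
  rw [s1, s2, Finset.sum_singleton, Finset.sum_singleton]
  have z : (∑ x ∈ Finset.Ico (2*r+2-i.1) (2*r+2),
      if ellB r T i x ≠ 0 then 1 else 0) = 0 := by
    refine Finset.sum_eq_zero fun y hy => ?_
    rw [Finset.mem_Ico] at hy
    rw [if_neg]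
    intro hne
    exact hne (List.count_eq_zero.mpr fun hm => by have := T.row_bound i y hm; omega)
  rw [z]
  omega

lemma posRoots_filter_cardB (r : ℕ) (hr : 1 ≤ r) (p : (Fin r → ℕ) → Prop)
    [DecidablePred p] :
    ((posRootsB r).filter p).card =
      (((Finset.Icc 1 r ×ˢ Finset.Icc 1 r).filter fun q => q.1 ≤ q.2).filter
          fun q => p (betaB r q.1 q.2)).card +
      (((Finset.Icc 1 r ×ˢ Finset.Icc 1 r).filter fun q => q.1 < q.2).filter
          fun q => p (gammaB r q.1 q.2)).card := by
  have hd : Disjoint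
      (Finset.filter p (((Finset.Icc 1 r ×ˢ Finset.Icc 1 r).filter fun q => q.1 ≤ q.2).image
        fun q => betaB r q.1 q.2))
      (Finset.filter p (((Finset.Icc 1 r ×ˢ Finset.Icc 1 r).filter fun q => q.1 < q.2).image
        fun q => gammaB r q.1 q.2)) := by
    rw [Finset.disjoint_left]
    intro v hv1 hv2
    obtain ⟨q1, hq1, rfl⟩ := Finset.mem_image.mp (Finset.mem_filter.mp hv1).1
    obtain ⟨q2, hq2, he⟩ := Finset.mem_image.mp (Finset.mem_filter.mp hv2).1
    simp only [Finset.mem_filter, Finset.mem_product, Finset.mem_Icc] at hq1 hq2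
    exact betaB_ne_gammaB (by omega) (by omega) (by omega) (by omega) he.symm
  have hinj1 : Set.InjOn (fun q : ℕ × ℕ => betaB r q.1 q.2)
      ↑(((Finset.Icc 1 r ×ˢ Finset.Icc 1 r).filter fun q => q.1 ≤ q.2).filter
          fun q => p (betaB r q.1 q.2)) := by
    intro q hq q' hq' he
    simp only [Finset.coe_filter, Set.mem_setOf_eq, Finset.mem_filter,
      Finset.mem_product, Finset.mem_Icc] at hq hq'
    have := betaB_inj (by omega) (by omega) (by omega) (by omega) (by omega) (by omega) he
    exact Prod.ext this.1 this.2
  have hinj2 : Set.InjOn (fun q : ℕ × ℕ => gammaB r q.1 q.2)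
      ↑(((Finset.Icc 1 r ×ˢ Finset.Icc 1 r).filter fun q => q.1 < q.2).filter
          fun q => p (gammaB r q.1 q.2)) := by
    intro q hq q' hq' he
    simp only [Finset.coe_filter, Set.mem_setOf_eq, Finset.mem_filter,
      Finset.mem_product, Finset.mem_Icc] at hq hq'
    have := gammaB_inj (by omega) (by omega) (by omega) (by omega) (by omega) (by omega) he
    exact Prod.ext this.1 this.2
  rw [posRootsB, Finset.filter_union, Finset.card_union_of_disjoint hd,
    Finset.filter_image, Finset.filter_image,
    Finset.card_image_of_injOn hinj1, Finset.card_image_of_injOn hinj2]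


lemma XiB_beta_lt' (r : ℕ) (T : TabB r) (ii k : ℕ) (hii : ii < r)
    (hk1 : ii+2 ≤ k) (hk2 : k ≤ r) :
    XiB r T (betaB r (ii+1) (k-1)) = ellB r T ⟨ii, hii⟩ k :=
  XiB_beta_lt r T ⟨ii, hii⟩ k hk1 hk2

lemma XiB_beta_r' (r : ℕ) (T : TabB r) (ii : ℕ) (hii : ii < r) :
    XiB r T (betaB r (ii+1) r) =
      2 * ellB r T ⟨ii, hii⟩ (2*r+1-ii) + ellB r T ⟨ii, hii⟩ (r+1) :=
  XiB_beta_r r T ⟨ii, hii⟩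

lemma XiB_gamma' (r : ℕ) (T : TabB r) (ii k : ℕ) (hii : ii < r)
    (hk1 : ii+2 ≤ k) (hk2 : k ≤ r) :
    XiB r T (gammaB r (ii+1) k) = ellB r T ⟨ii, hii⟩ (2*r+2-k) :=
  XiB_gamma r T ⟨ii, hii⟩ k hk1 hk2

lemma betaPart_lt_cardB (r : ℕ) (hr : 1 ≤ r) (T : TabB r) :
    (((((Finset.Icc 1 r ×ˢ Finset.Icc 1 r).filter fun q => q.1 ≤ q.2).filter
        fun q => XiB r T (betaB r q.1 q.2) ≠ 0).filter fun q => ¬ q.2 = r).card)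
      = ∑ i : Fin r, ((Finset.Icc (i.1+2) r).filter fun x => ellB r T i x ≠ 0).card := by
  rw [← Finset.card_sigma]
  refine Finset.card_bij' (fun q hq => ⟨⟨q.1-1, by
      simp only [Finset.mem_filter, Finset.mem_product, Finset.mem_Icc] at hq; omega⟩,
      q.2+1⟩)
    (fun z _ => (z.1.1+1, z.2-1)) ?_ ?_ ?_ ?_
  · intro q hq
    simp only [Finset.mem_filter, Finset.mem_product, Finset.mem_Icc] at hq
    simp only [Finset.mem_sigma, Finset.mem_filter, Finset.mem_Icc, Fin.val_mk]
    refine ⟨Finset.mem_univ _, ⟨by omega, by omega⟩, ?_⟩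
    have hXi := hq.1.2
    have e : betaB r q.1 q.2 = betaB r ((q.1-1)+1) ((q.2+1)-1) :=
      betaB_congr (by omega) (by omega)
    rw [e, XiB_beta_lt' r T (q.1-1) (q.2+1) (by omega) (by omega) (by omega)] at hXi
    exact hXi
  · intro z hz
    simp only [Finset.mem_sigma, Finset.mem_filter, Finset.mem_Icc] at hz
    have hzr : z.1.1 < r := z.1.2
    simp only [Finset.mem_filter, Finset.mem_product, Finset.mem_Icc]
    refine ⟨⟨by omega, ?_⟩, by omega⟩
    rw [XiB_beta_lt' r T z.1.1 z.2 hzr (by omega) (by omega)]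
    exact hz.2.2
  · intro q hq
    simp only [Finset.mem_filter, Finset.mem_product, Finset.mem_Icc] at hq
    refine Prod.ext ?_ ?_ <;> dsimp only <;> omega
  · intro z hz
    simp only [Finset.mem_sigma, Finset.mem_filter, Finset.mem_Icc] at hz
    refine Sigma.ext ?_ ?_ <;> dsimp only
    · exact Fin.ext (by dsimp only [Fin.val_mk]; omega)
    · exact heq_of_eq (by omega)

lemma betaPart_eq_cardB (r : ℕ) (hr : 1 ≤ r) (T : TabB r) :
    (((((Finset.Icc 1 r ×ˢ Finset.Icc 1 r).filter fun q => q.1 ≤ q.2).filter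
        fun q => XiB r T (betaB r q.1 q.2) ≠ 0).filter fun q => q.2 = r).card)
      = ∑ i : Fin r,
          (if 2 * ellB r T i (2*r+1-i.1) + ellB r T i (r+1) ≠ 0 then 1 else 0) := by
  rw [← Finset.card_filter]
  refine Finset.card_bij' (fun q hq => ⟨q.1-1, by
      simp only [Finset.mem_filter, Finset.mem_product, Finset.mem_Icc] at hq; omega⟩)
    (fun i _ => (i.1+1, r)) ?_ ?_ ?_ ?_
  · intro q hq
    simp only [Finset.mem_filter, Finset.mem_product, Finset.mem_Icc] at hq
    simp only [Finset.mem_filter, Fin.val_mk]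
    refine ⟨Finset.mem_univ _, ?_⟩
    have hXi := hq.1.2
    have e : betaB r q.1 q.2 = betaB r ((q.1-1)+1) r := betaB_congr (by omega) hq.2
    rw [e, XiB_beta_r' r T (q.1-1) (by omega)] at hXi
    exact hXi
  · intro i hi
    rw [Finset.mem_filter] at hi
    have hir : i.1 < r := i.2
    simp only [Finset.mem_filter, Finset.mem_product, Finset.mem_Icc]
    refine ⟨⟨by omega, ?_⟩, trivial⟩
    rw [XiB_beta_r' r T i.1 i.2]
    exact hi.2
  · intro q hq
    simp only [Finset.mem_filter, Finset.mem_product, Finset.mem_Icc] at hq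
    refine Prod.ext ?_ ?_ <;> dsimp only <;> omega
  · intro i hi
    exact Fin.ext (by dsimp only [Fin.val_mk]; omega)

lemma gammaPart_cardB (r : ℕ) (hr : 1 ≤ r) (T : TabB r) :
    ((((Finset.Icc 1 r ×ˢ Finset.Icc 1 r).filter fun q => q.1 < q.2).filter
        fun q => XiB r T (gammaB r q.1 q.2) ≠ 0).card)
      = ∑ i : Fin r, ((Finset.Icc (r+2) (2*r-i.1)).filter fun x => ellB r T i x ≠ 0).card := by
  rw [← Finset.card_sigma]
  refine Finset.card_bij' (fun q hq => ⟨⟨q.1-1, by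
      simp only [Finset.mem_filter, Finset.mem_product, Finset.mem_Icc] at hq; omega⟩,
      2*r+2-q.2⟩)
    (fun z _ => (z.1.1+1, 2*r+2-z.2)) ?_ ?_ ?_ ?_
  · intro q hq
    simp only [Finset.mem_filter, Finset.mem_product, Finset.mem_Icc] at hq
    simp only [Finset.mem_sigma, Finset.mem_filter, Finset.mem_Icc, Fin.val_mk]
    refine ⟨Finset.mem_univ _, ⟨by omega, by omega⟩, ?_⟩
    have hXi := hq.2
    have e : gammaB r q.1 q.2 = gammaB r ((q.1-1)+1) q.2 := gammaB_congr (by omega) rfl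
    rw [e, XiB_gamma' r T (q.1-1) q.2 (by omega) (by omega) (by omega)] at hXi
    exact hXi
  · intro z hz
    simp only [Finset.mem_sigma, Finset.mem_filter, Finset.mem_Icc] at hz
    have hzr : z.1.1 < r := z.1.2
    simp only [Finset.mem_filter, Finset.mem_product, Finset.mem_Icc]
    refine ⟨⟨by omega, by omega⟩, ?_⟩
    rw [XiB_gamma' r T z.1.1 (2*r+2-z.2) hzr (by omega) (by omega)]
    have e : 2*r+2-(2*r+2-z.2) = z.2 := by omega
    rw [e]
    exact hz.2.2
  · intro q hq
    simp only [Finset.mem_filter, Finset.mem_product, Finset.mem_Icc] at hq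
    refine Prod.ext ?_ ?_ <;> dsimp only <;> omega
  · intro z hz
    simp only [Finset.mem_sigma, Finset.mem_filter, Finset.mem_Icc] at hz
    refine Sigma.ext ?_ ?_ <;> dsimp only
    · exact Fin.ext (by dsimp only [Fin.val_mk]; omega)
    · exact heq_of_eq (by omega)

lemma seg_eqB (r : ℕ) (hr : 1 ≤ r) (T : TabB r) :
    segB r T = ((posRootsB r).filter fun v => XiB r T v ≠ 0).card := by
  have E2 : ((posRootsB r).filter fun v => XiB r T v ≠ 0).card =
      (∑ i : Fin r, ((Finset.Icc (i.1+2) r).filter fun x => ellB r T i x ≠ 0).card) +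
      (∑ i : Fin r, ((Finset.Icc (r+2) (2*r-i.1)).filter fun x => ellB r T i x ≠ 0).card) +
      (∑ i : Fin r,
        (if 2 * ellB r T i (2*r+1-i.1) + ellB r T i (r+1) ≠ 0 then 1 else 0)) := by
    rw [posRoots_filter_cardB r hr (fun v => XiB r T v ≠ 0)]
    rw [← Finset.card_filter_add_card_filter_not
      (p := fun q : ℕ × ℕ => q.2 = r)
      (s := ((Finset.Icc 1 r ×ˢ Finset.Icc 1 r).filter fun q => q.1 ≤ q.2).filter
        fun q => XiB r T (betaB r q.1 q.2) ≠ 0)]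
    rw [betaPart_lt_cardB r hr T, betaPart_eq_cardB r hr T, gammaPart_cardB r hr T]
    omega
  have E1 : segB' r T =
      (∑ i : Fin r, ((Finset.Icc (i.1+2) r).filter fun x => ellB r T i x ≠ 0).card) +
      (∑ i : Fin r, ((Finset.Icc (r+2) (2*r-i.1)).filter fun x => ellB r T i x ≠ 0).card) +
      (∑ i : Fin r, ((if ellB r T i (r+1) ≠ 0 then 1 else 0) +
        (if ellB r T i (2*r+1-i.1) ≠ 0 then 1 else 0))) := by
    rw [segB', Finset.sum_congr rfl (fun i _ => rowSplitB r T i)]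
    rw [Finset.sum_add_distrib, Finset.sum_add_distrib]
  have E3 : eB r T = ∑ i : Fin r,
      (if ellB r T i (r+1) ≠ 0 ∧ ellB r T i (2*r+1-i.1) ≠ 0 then 1 else 0) := by
    rw [eB, Finset.card_filter]
  have E4 : (∑ i : Fin r, ((if ellB r T i (r+1) ≠ 0 then 1 else 0) +
        (if ellB r T i (2*r+1-i.1) ≠ 0 then 1 else 0))) =
      (∑ i : Fin r,
        (if 2 * ellB r T i (2*r+1-i.1) + ellB r T i (r+1) ≠ 0 then 1 else 0)) +
      (∑ i : Fin r,
        (if ellB r T i (r+1) ≠ 0 ∧ ellB r T i (2*r+1-i.1) ≠ 0 then 1 else 0)) := by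
    rw [← Finset.sum_add_distrib]
    refine Finset.sum_congr rfl fun i _ => ?_
    split_ifs <;> omega
  rw [segB, E1, E2, E3]
  omega

/-- `Ξ` is a bijection from `𝒯(∞)` of type `B_r` onto the set of
all functions from the positive roots of `B_r` to `ℕ`; moreover
`seg(T) = seg′(T) - e_B(T)` equals the number of positive roots where `Ξ(T)`
is nonzero. -/
theorem stmt3 (r : ℕ) (hr : 2 ≤ r) :
    Function.Bijective
      (fun (T : TabB r) (α : {v // v ∈ posRootsB r}) => XiB r T α.1) ∧
    (∀ T : TabB r,
      segB r T = ((posRootsB r).filter fun v => XiB r T v ≠ 0).card) := by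
  exact ⟨⟨XiB_injectiveB r (by omega), XiB_surjectiveB r (by omega)⟩,
    fun T => seg_eqB r (by omega) T⟩
end

section
/- The map Ξ is a bijection from 𝒯(∞) onto the set of all functions from the positive roots {β_{i,k} : 1 ≤ i ≤ k ≤ r−1} ∪ {γ_{i,k} : 1 ≤ i ≤ k ≤ r} of C_r to the nonnegative integers. Moreover, for every T ∈ 𝒯(∞), seg(T) equals the number of positive roots α with Ξ(T)(α) ≠ 0. -/
/-- Marginally large semistandard Young tableaux of type `C_r`, on the totally
ordered alphabet `{1 ≺ ⋯ ≺ r ≺ r̄ ≺ ⋯ ≺ 1̄}`, encoded by the order isomorphism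
onto `{1, …, 2r} ⊂ ℕ` sending `k ↦ k` and `k̄ ↦ 2r+1-k`. Conditions: exactly
`r` rows, rows weakly increasing, columns strictly increasing, first column
`1, …, r`, every entry of row `i` is `≼ ī`, and the number of `i`-entries in
row `i` exceeds the number of boxes in row `i+1` by exactly one. -/
structure TabC (r : ℕ) where
  row : Fin r → List ℕ
  entry_mem : ∀ i : Fin r, ∀ e ∈ row i, 1 ≤ e ∧ e ≤ 2 * r
  row_weak : ∀ i : Fin r, (row i).Chain' (· ≤ ·)
  first_col : ∀ i : Fin r, (row i).head? = some (i.1 + 1)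
  row_bound : ∀ i : Fin r, ∀ e ∈ row i, e ≤ 2 * r - i.1
  col_le : ∀ i : Fin r, ∀ h : i.1 + 1 < r,
    (row ⟨i.1 + 1, h⟩).length ≤ (row i).length
  col_strict : ∀ i : Fin r, ∀ h : i.1 + 1 < r, ∀ j < (row ⟨i.1 + 1, h⟩).length,
    (row i).getD j 0 < (row ⟨i.1 + 1, h⟩).getD j 0
  marg_large : ∀ i : Fin r, (row i).count (i.1 + 1) =
    (if h : i.1 + 1 < r then (row ⟨i.1 + 1, h⟩).length else 0) + 1

/-- `ℓ_{i,x}(T)`: the number of entries with code `x` in row `i` (row `i : Fin r`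
has label `i+1`; the symbol `k̄` has code `2r+1-k`). -/
def ellC (r : ℕ) (T : TabC r) (i : Fin r) (x : ℕ) : ℕ := (T.row i).count x

/-- `seg(T)`: the number of pairs `(i,x)` with `x ≻ i` and `ℓ_{i,x}(T) > 0`. -/
def segC (r : ℕ) (T : TabC r) : ℕ :=
  ∑ i : Fin r, ((Finset.Icc (i.1 + 2) (2 * r)).filter fun x => ellC r T i x ≠ 0).card

/-- The positive root `β_{i,k} = α_i + ⋯ + α_k` of `C_r` (`1 ≤ i ≤ k ≤ r-1`),
in simple-root coordinates. -/
def betaC (r : ℕ) (i k : ℕ) : Fin r → ℕ :=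
  fun j => if i ≤ j.1 + 1 ∧ j.1 + 1 ≤ k then 1 else 0

/-- The positive root
`γ_{i,k} = α_i + ⋯ + α_{r-1} + α_r + α_{r-1} + ⋯ + α_k` of `C_r`
(`1 ≤ i ≤ k ≤ r`), in simple-root coordinates. -/
def gammaC (r : ℕ) (i k : ℕ) : Fin r → ℕ :=
  fun j => if j.1 + 1 = r then 1
    else if i ≤ j.1 + 1 ∧ j.1 + 1 ≤ k - 1 then 1
    else if k ≤ j.1 + 1 then 2 else 0

/-- The set of positive roots of `C_r`. -/
def posRootsC (r : ℕ) : Finset (Fin r → ℕ) :=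
  ((Finset.Icc 1 (r - 1) ×ˢ Finset.Icc 1 (r - 1)).filter fun p => p.1 ≤ p.2).image
      (fun p => betaC r p.1 p.2) ∪
    ((Finset.Icc 1 r ×ˢ Finset.Icc 1 r).filter fun p => p.1 ≤ p.2).image
      (fun p => gammaC r p.1 p.2)

/-- `Ξ(T)`, extended by zero to all vectors: `Ξ(T)(β_{i,k-1}) = ℓ_{i,k}(T)` for
`i < k ≤ r` and `Ξ(T)(γ_{i,k}) = ℓ_{i,k̄}(T)` for `i ≤ k ≤ r`. -/
def XiC (r : ℕ) (T : TabC r) (v : Fin r → ℕ) : ℕ :=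
  ∑ i : Fin r,
    ((∑ k ∈ Finset.Icc (i.1 + 2) r,
        if v = betaC r (i.1 + 1) (k - 1) then ellC r T i k else 0) +
      (∑ k ∈ Finset.Icc (i.1 + 1) r,
        if v = gammaC r (i.1 + 1) k then ellC r T i (2 * r + 1 - k) else 0))

/-- `-wt(T) = Σ_α Ξ(T)(α)·α`, in simple-root coordinates. -/
def negwtC (r : ℕ) (T : TabC r) : Fin r → ℕ :=
  ∑ v ∈ posRootsC r, XiC r T v • v

def rhoC (r i k : ℕ) : Fin r → ℕ :=
  if k ≤ r then betaC r (i+1) (k-1) else gammaC r (i+1) (2*r+1-k)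
lemma rhoC_apply (r i k m : ℕ) (hk : i+2 ≤ k) (hkr : k ≤ 2*r - i) (hm : m < r) :
    rhoC r i k ⟨m, hm⟩ = if k ≤ r then (if i ≤ m ∧ m+2 ≤ k then 1 else 0)
      else (if m+1 = r then 1 else if i ≤ m ∧ m + 1 + k ≤ 2*r then 1
        else if 2*r+1 ≤ m+1+k then 2 else 0) := by
  rw [rhoC]
  by_cases h : k ≤ r <;>
    simp only [h, if_true, if_false, betaC, gammaC] <;> split_ifs <;> omega
lemma rhoC_aux1 {r i k i' k' : ℕ} (hi : i < r) (hk : i+2 ≤ k) (hkr : k ≤ 2*r-i)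
    (hi' : i' < r) (hk' : i'+2 ≤ k') (hkr' : k' ≤ 2*r-i')
    (h : rhoC r i k = rhoC r i' k') (hlt : i < i') : False := by
  have h0 := congrFun h ⟨i, hi⟩
  rw [rhoC_apply r i k i hk hkr hi, rhoC_apply r i' k' i hk' hkr' hi] at h0
  split_ifs at h0 <;> omega
lemma rhoC_aux2 {r i k k' : ℕ} (hi : i < r) (hk : i+2 ≤ k) (hkr : k ≤ 2*r-i)
    (hk' : i+2 ≤ k') (hkr' : k' ≤ 2*r-i)
    (h : rhoC r i k = rhoC r i k') (hlt : k < k') : False := by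
  have hrm : r - 1 < r := by omega
  have hb := congrFun h ⟨r-1, hrm⟩
  rw [rhoC_apply r i k (r-1) hk hkr hrm, rhoC_apply r i k' (r-1) hk' hkr' hrm] at hb
  by_cases hk1 : k ≤ r
  · have hk'1 : k' ≤ r := by have hb2 := hb; split_ifs at hb2 <;> omega
    have hm2 : k - 1 < r := by omega
    have h0 := congrFun h ⟨k-1, hm2⟩
    rw [rhoC_apply r i k (k-1) hk hkr hm2, rhoC_apply r i k' (k-1) hk' hkr' hm2] at h0
    split_ifs at h0 <;> omega
  · have hk'1 : ¬ k' ≤ r := by have hb2 := hb; split_ifs at hb2 <;> omega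
    have hm2 : 2*r-k' < r := by omega
    have h0 := congrFun h ⟨2*r-k', hm2⟩
    rw [rhoC_apply r i k (2*r-k') hk hkr hm2, rhoC_apply r i k' (2*r-k') hk' hkr' hm2] at h0
    split_ifs at h0 <;> omega
lemma rhoC_inj {r i k i' k' : ℕ} (hi : i < r) (hk : i+2 ≤ k) (hkr : k ≤ 2*r-i)
    (hi' : i' < r) (hk' : i'+2 ≤ k') (hkr' : k' ≤ 2*r-i')
    (h : rhoC r i k = rhoC r i' k') : i = i' ∧ k = k' := by
  have hii : i = i' := by
    rcases lt_trichotomy i i' with hlt | he | hlt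
    · exact absurd (rhoC_aux1 hi hk hkr hi' hk' hkr' h hlt) (not_false)
    · exact he
    · exact absurd (rhoC_aux1 hi' hk' hkr' hi hk hkr h.symm hlt) (not_false)
  subst hii
  refine ⟨rfl, ?_⟩
  rcases lt_trichotomy k k' with hlt | he | hlt
  · exact absurd (rhoC_aux2 hi hk hkr hk' hkr' h hlt) (not_false)
  · exact he
  · exact absurd (rhoC_aux2 hi hk' hkr' hk hkr h.symm hlt) (not_false)
def idxC (r : ℕ) : Finset (ℕ × ℕ) :=
  (Finset.range r).biUnion fun i => (Finset.Icc (i+2) (2*r-i)).image fun k => (i, k)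
lemma mem_idxC {r : ℕ} {p : ℕ × ℕ} :
    p ∈ idxC r ↔ p.1 < r ∧ p.1+2 ≤ p.2 ∧ p.2 ≤ 2*r-p.1 := by
  simp only [idxC, Finset.mem_biUnion, Finset.mem_range, Finset.mem_image, Finset.mem_Icc]
  constructor
  · rintro ⟨i, hi, k, hk, rfl⟩; exact ⟨hi, hk.1, hk.2⟩
  · rintro ⟨h1, h2, h3⟩; exact ⟨p.1, h1, p.2, ⟨h2, h3⟩, rfl⟩
lemma betaC_eq_rhoC {r p1 p2 : ℕ} (h1 : 1 ≤ p1) (h2 : p2 ≤ r - 1) (hr : 1 ≤ r) :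
    betaC r p1 p2 = rhoC r (p1-1) (p2+1) := by
  rw [rhoC, if_pos (show p2+1 ≤ r by omega), show p1-1+1 = p1 by omega,
    show p2+1-1 = p2 by omega]
lemma gammaC_eq_rhoC {r p1 p2 : ℕ} (h1 : 1 ≤ p1) (h2 : p2 ≤ r) :
    gammaC r p1 p2 = rhoC r (p1-1) (2*r+1-p2) := by
  rw [rhoC, if_neg (by omega), show p1-1+1 = p1 by omega,
    show 2*r+1-(2*r+1-p2) = p2 by omega]
lemma posRootsC_eq (r : ℕ) (hr : 2 ≤ r) :
    posRootsC r = (idxC r).image fun p => rhoC r p.1 p.2 := by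
  ext v
  simp only [posRootsC, Finset.mem_union, Finset.mem_image, Finset.mem_filter,
    Finset.mem_product, Finset.mem_Icc, mem_idxC, Prod.exists]
  constructor
  · rintro (⟨p1, p2, ⟨⟨⟨g1, g2⟩, g3, g4⟩, g5⟩, rfl⟩ | ⟨p1, p2, ⟨⟨⟨g1, g2⟩, g3, g4⟩, g5⟩, rfl⟩)
    · exact ⟨p1 - 1, p2 + 1, ⟨by omega, by omega, by omega⟩,
        (betaC_eq_rhoC g1 g4 (by omega)).symm⟩
    · exact ⟨p1 - 1, 2*r+1-p2, ⟨by omega, by omega, by omega⟩,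
        (gammaC_eq_rhoC g1 g4).symm⟩
  · rintro ⟨i, k, ⟨h1, h2, h3⟩, rfl⟩
    by_cases hk : k ≤ r
    · exact Or.inl ⟨i+1, k-1, ⟨⟨⟨by omega, by omega⟩, by omega, by omega⟩, by omega⟩,
        (show rhoC r i k = _ by rw [rhoC, if_pos hk]).symm⟩
    · exact Or.inr ⟨i+1, 2*r+1-k, ⟨⟨⟨by omega, by omega⟩, by omega, by omega⟩, by omega⟩,
        (show rhoC r i k = _ by rw [rhoC, if_neg hk]).symm⟩
def flatRep (g : ℕ → ℕ) (a n : ℕ) : List ℕ :=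
  (List.range' a n).flatMap fun x => List.replicate (g x) x
lemma count_flatRep (g : ℕ → ℕ) (a n x : ℕ) :
    (flatRep g a n).count x = if a ≤ x ∧ x < a + n then g x else 0 := by
  induction n generalizing a with
  | zero =>
    simp only [flatRep, List.range'_zero, List.flatMap_nil, List.count_nil]
    rw [if_neg (by omega)]
  | succ n ih =>
    rw [flatRep, List.range'_succ, List.flatMap_cons, List.count_append,
      List.count_replicate]
    simp only [beq_iff_eq]
    rw [show ((List.range' (a+1) n).flatMap fun x => List.replicate (g x) x) =
      flatRep g (a+1) n from rfl, ih]
    by_cases hxa : x = a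
    · subst hxa
      rw [if_pos rfl, if_neg (by omega : ¬(x+1 ≤ x ∧ x < x+1+n)), if_pos (by omega)]
      omega
    · rw [if_neg (by omega : ¬(a = x))]
      split_ifs <;> omega
lemma mem_flatRep {g : ℕ → ℕ} {a n x : ℕ} (h : x ∈ flatRep g a n) :
    a ≤ x ∧ x < a + n := by
  simp only [flatRep, List.mem_flatMap, List.mem_range'_1] at h
  obtain ⟨y, hy, hx⟩ := h
  rw [List.eq_of_mem_replicate hx]
  omega
lemma sorted_flatRep (g : ℕ → ℕ) (a n : ℕ) :
    (flatRep g a n).Pairwise (· ≤ ·) := by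
  induction n generalizing a with
  | zero => simp [flatRep]
  | succ n ih =>
    rw [flatRep, List.range'_succ, List.flatMap_cons]
    rw [show ((List.range' (a+1) n).flatMap fun x => List.replicate (g x) x) =
      flatRep g (a+1) n from rfl]
    rw [List.pairwise_append]
    refine ⟨List.pairwise_replicate.2 (Or.inr le_rfl), ih (a+1), ?_⟩
    intro x hx y hy
    rw [List.eq_of_mem_replicate hx]
    exact le_of_lt (lt_of_lt_of_le (Nat.lt_succ_self a) (mem_flatRep hy).1)
def rlenF (r : ℕ) (f : ℕ → ℕ → ℕ) (i : ℕ) : ℕ :=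
  if i < r then rlenF r f (i+1) + 1 + (flatRep (f i) (i+2) (2*r-2*i-1)).length
  else 0
termination_by r - i
decreasing_by omega
def rowF (r : ℕ) (f : ℕ → ℕ → ℕ) (i : ℕ) : List ℕ :=
  List.replicate (rlenF r f (i+1) + 1) (i+1) ++ flatRep (f i) (i+2) (2*r-2*i-1)
lemma rlenF_of_ge {r : ℕ} {f : ℕ → ℕ → ℕ} {i : ℕ} (h : r ≤ i) : rlenF r f i = 0 := by
  rw [rlenF, if_neg (by omega)]
lemma rlenF_of_lt {r : ℕ} {f : ℕ → ℕ → ℕ} {i : ℕ} (h : i < r) :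
    rlenF r f i = rlenF r f (i+1) + 1 + (flatRep (f i) (i+2) (2*r-2*i-1)).length := by
  rw [rlenF]; rw [if_pos h]
lemma length_rowF {r : ℕ} (f : ℕ → ℕ → ℕ) {i : ℕ} (h : i < r) :
    (rowF r f i).length = rlenF r f i := by
  rw [rowF, List.length_append, List.length_replicate, rlenF_of_lt h]
lemma count_rowF {r : ℕ} (f : ℕ → ℕ → ℕ) {i : ℕ} (h : i < r) (x : ℕ) :
    (rowF r f i).count x = if x = i+1 then rlenF r f (i+1) + 1
      else if i+2 ≤ x ∧ x ≤ 2*r-i then f i x else 0 := by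
  rw [rowF, List.count_append, List.count_replicate, count_flatRep]
  simp only [beq_iff_eq]
  by_cases hx : x = i+1
  · rw [if_pos hx.symm, if_pos hx, if_neg (by omega)]
  · rw [if_neg (fun hh => hx hh.symm), if_neg hx]
    split_ifs <;> omega
lemma mem_rowF {r : ℕ} {f : ℕ → ℕ → ℕ} {i x : ℕ} (h : i < r) (hx : x ∈ rowF r f i) :
    i+1 ≤ x ∧ x ≤ 2*r-i := by
  rw [rowF, List.mem_append] at hx
  rcases hx with hx | hx
  · rw [List.eq_of_mem_replicate hx]; omega
  · have := mem_flatRep hx; omega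
lemma sorted_rowF (r : ℕ) (f : ℕ → ℕ → ℕ) (i : ℕ) :
    (rowF r f i).Pairwise (· ≤ ·) := by
  rw [rowF, List.pairwise_append]
  refine ⟨List.pairwise_replicate.2 (Or.inr le_rfl), sorted_flatRep _ _ _, ?_⟩
  intro x hx y hy
  rw [List.eq_of_mem_replicate hx]
  have := mem_flatRep hy
  omega
lemma getD_rowF {r : ℕ} (f : ℕ → ℕ → ℕ) (i j : ℕ) (hj : j < rlenF r f (i+1) + 1) :
    (rowF r f i).getD j 0 = i + 1 := by
  rw [rowF, List.getD_append _ _ _ _ (by simpa using hj),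
    List.getD_eq_getElem _ _ (by simpa using hj), List.getElem_replicate]
def mkTab (r : ℕ) (f : ℕ → ℕ → ℕ) : TabC r where
  row i := rowF r f i.1
  entry_mem i e he := by
    have h := mem_rowF i.2 he
    have := i.2
    omega
  row_weak i := List.isChain_iff_pairwise.2 (sorted_rowF r f i.1)
  first_col i := by
    show (rowF r f i.1).head? = some (i.1+1)
    rw [rowF, List.replicate_succ]; rfl
  row_bound i e he := (mem_rowF i.2 he).2
  col_le i h := by
    rw [length_rowF f h, length_rowF f i.2, rlenF_of_lt i.2]
    omega
  col_strict i h j hj := by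
    have hj' : j < (rowF r f (i.1+1)).length := hj
    rw [length_rowF f h] at hj'
    have h1 : (rowF r f i.1).getD j 0 = i.1 + 1 := getD_rowF f i.1 j (by omega)
    have h2 : (rowF r f (i.1+1)).getD j 0 ∈ rowF r f (i.1+1) := by
      rw [List.getD_eq_getElem _ _ (by rw [length_rowF f h]; exact hj')]
      exact List.getElem_mem _
    have h3 := mem_rowF h h2
    show (rowF r f i.1).getD j 0 < (rowF r f (i.1+1)).getD j 0
    omega
  marg_large i := by
    rw [count_rowF f i.2, if_pos rfl]
    by_cases h : i.1 + 1 < r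
    · rw [dif_pos h, length_rowF f h]
    · rw [dif_neg h, rlenF_of_ge (by omega)]
lemma ellC_mkTab {r : ℕ} (f : ℕ → ℕ → ℕ) (i : Fin r) {x : ℕ}
    (h1 : i.1+2 ≤ x) (h2 : x ≤ 2*r-i.1) :
    ellC r (mkTab r f) i x = f i.1 x := by
  rw [ellC, mkTab, count_rowF f i.2, if_neg (by omega), if_pos ⟨h1, h2⟩]
lemma TabC.ext' {r : ℕ} {T T' : TabC r} (h : T.row = T'.row) : T = T' := by
  cases T; cases T'; cases h; rfl
lemma mem_row_bounds {r : ℕ} (T : TabC r) (i : Fin r) {e : ℕ} (he : e ∈ T.row i) :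
    i.1+1 ≤ e ∧ e ≤ 2*r-i.1 := by
  refine ⟨?_, T.row_bound i e he⟩
  have hs := List.isChain_iff_pairwise.1 (T.row_weak i)
  have hh := T.first_col i
  rcases hl : T.row i with _ | ⟨b, t⟩
  · rw [hl] at hh; simp at hh
  · rw [hl] at hh he hs
    simp only [List.head?_cons, Option.some.injEq] at hh
    subst hh
    rcases List.mem_cons.1 he with rfl | he
    · omega
    · exact (List.pairwise_cons.1 hs).1 e he
lemma count_zero_lo {r : ℕ} (T : TabC r) (i : Fin r) {x : ℕ} (hx : x ≤ i.1) :
    (T.row i).count x = 0 :=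
  List.count_eq_zero.2 fun h => by have := mem_row_bounds T i h; omega
lemma count_zero_hi {r : ℕ} (T : TabC r) (i : Fin r) {x : ℕ} (hx : 2*r-i.1 < x) :
    (T.row i).count x = 0 :=
  List.count_eq_zero.2 fun h => by have := mem_row_bounds T i h; omega
lemma length_formula {r : ℕ} (T : TabC r) (i : Fin r) :
    (T.row i).length = (if h : i.1+1 < r then (T.row ⟨i.1+1,h⟩).length else 0) + 1
      + ∑ x ∈ Finset.Icc (i.1+2) (2*r-i.1), (T.row i).count x := by
  have hi := i.2
  have hlen : (T.row i).length = ∑ x ∈ Finset.Icc (i.1+1) (2*r-i.1), (T.row i).count x := by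
    have base : ∑ a ∈ (T.row i).toFinset, (T.row i).count a = (T.row i).length := by
      simpa using Multiset.toFinset_sum_count_eq (↑(T.row i) : Multiset ℕ)
    rw [← base]
    apply Finset.sum_subset
    · intro x hx
      rw [List.mem_toFinset] at hx
      have := mem_row_bounds T i hx
      rw [Finset.mem_Icc]; omega
    · intro x _ hx
      exact List.count_eq_zero_of_not_mem (fun hm => hx (List.mem_toFinset.2 hm))
  rw [hlen, show Finset.Icc (i.1+1) (2*r-i.1) = insert (i.1+1) (Finset.Icc (i.1+2) (2*r-i.1)) by
      ext y; simp only [Finset.mem_insert, Finset.mem_Icc]; omega,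
    Finset.sum_insert (by simp only [Finset.mem_Icc]; omega), T.marg_large i]
lemma eq_of_counts {r : ℕ} {T T' : TabC r}
    (h : ∀ i : Fin r, ∀ x, i.1+2 ≤ x → x ≤ 2*r-i.1 →
      (T.row i).count x = (T'.row i).count x) : T = T' := by
  have hlen : ∀ n, ∀ i : Fin r, r - i.1 ≤ n → (T.row i).length = (T'.row i).length := by
    intro n
    induction n with
    | zero => intro i hi; have := i.2; omega
    | succ n ih =>
      intro i hi
      rw [length_formula T i, length_formula T' i]
      have hsum : ∑ x ∈ Finset.Icc (i.1+2) (2*r-i.1), (T.row i).count x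
          = ∑ x ∈ Finset.Icc (i.1+2) (2*r-i.1), (T'.row i).count x := by
        apply Finset.sum_congr rfl
        intro x hx
        rw [Finset.mem_Icc] at hx
        exact h i x hx.1 hx.2
      rw [hsum]
      by_cases hir : i.1 + 1 < r
      · rw [dif_pos hir, dif_pos hir, ih ⟨i.1+1, hir⟩ (by simp only [Fin.val_mk]; omega)]
      · rw [dif_neg hir, dif_neg hir]
  have hcount : ∀ i : Fin r, ∀ x, (T.row i).count x = (T'.row i).count x := by
    intro i x
    rcases le_or_gt x i.1 with hx | hx
    · rw [count_zero_lo T i hx, count_zero_lo T' i hx]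
    rcases eq_or_lt_of_le (show i.1+1 ≤ x from hx) with rfl | hx2
    · rw [T.marg_large i, T'.marg_large i]
      by_cases hir : i.1 + 1 < r
      · rw [dif_pos hir, dif_pos hir, hlen r ⟨i.1+1, hir⟩ (by simp only [Fin.val_mk]; omega)]
      · rw [dif_neg hir, dif_neg hir]
    rcases le_or_gt x (2*r-i.1) with hx3 | hx3
    · exact h i x (by omega) hx3
    · rw [count_zero_hi T i hx3, count_zero_hi T' i hx3]
  apply TabC.ext'
  funext i
  refine (List.perm_iff_count.2 (hcount i)).eq_of_pairwise'
    (List.isChain_iff_pairwise.1 (T.row_weak i)) (List.isChain_iff_pairwise.1 (T'.row_weak i))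
lemma beta_rho {r : ℕ} (i k : ℕ) (h : k ≤ r) : betaC r (i+1) (k-1) = rhoC r i k :=
  (show rhoC r i k = _ by rw [rhoC, if_pos h]).symm
lemma gamma_rho {r : ℕ} (i k : ℕ) (h : ¬ k ≤ r) : gammaC r (i+1) (2*r+1-k) = rhoC r i k :=
  (show rhoC r i k = _ by rw [rhoC, if_neg h]).symm
lemma gamma_rho' {r : ℕ} (i k' : ℕ) (h1 : k' ≤ r) (h2 : 1 ≤ k') (hir : i < r) :
    gammaC r (i+1) k' = rhoC r i (2*r+1-k') := by
  have h3 : ¬ (2*r+1-k' ≤ r) := by omega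
  rw [← gamma_rho i (2*r+1-k') h3, show 2*r+1-(2*r+1-k') = k' by omega]
lemma XiC_rho {r : ℕ} (T : TabC r) {i k : ℕ} (hi : i < r) (hk : i+2 ≤ k)
    (hkr : k ≤ 2*r-i) :
    XiC r T (rhoC r i k) = ellC r T ⟨i, hi⟩ k := by
  rw [XiC]
  rw [Finset.sum_eq_single_of_mem (⟨i, hi⟩ : Fin r) (Finset.mem_univ _) ?side]
  case side =>
    intro b _ hb
    have hbne : b.1 ≠ i := fun hh => hb (Fin.ext hh)
    have hA : (∑ k' ∈ Finset.Icc (b.1 + 2) r,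
        if rhoC r i k = betaC r (b.1 + 1) (k' - 1) then ellC r T b k' else 0) = 0 := by
      apply Finset.sum_eq_zero
      intro k' hk'
      rw [Finset.mem_Icc] at hk'
      rw [beta_rho b.1 k' hk'.2, if_neg]
      intro heq
      have := rhoC_inj hi hk hkr b.2 hk'.1 (by omega) heq
      omega
    have hB : (∑ k' ∈ Finset.Icc (b.1 + 1) r,
        if rhoC r i k = gammaC r (b.1 + 1) k' then ellC r T b (2*r+1-k') else 0) = 0 := by
      apply Finset.sum_eq_zero
      intro k' hk'
      rw [Finset.mem_Icc] at hk'
      rw [gamma_rho' b.1 k' hk'.2 (by have := b.2; omega) b.2, if_neg]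
      intro heq
      have := rhoC_inj hi hk hkr b.2 (by omega) (by have := b.2; omega) heq
      omega
    rw [hA, hB]
    rfl
  · show (∑ k' ∈ Finset.Icc (i + 2) r,
        if rhoC r i k = betaC r (i + 1) (k' - 1) then ellC r T ⟨i, hi⟩ k' else 0) +
      (∑ k' ∈ Finset.Icc (i + 1) r,
        if rhoC r i k = gammaC r (i + 1) k' then ellC r T ⟨i, hi⟩ (2*r+1-k') else 0)
      = ellC r T ⟨i, hi⟩ k
    by_cases hk2 : k ≤ r
    · have hB : (∑ k' ∈ Finset.Icc (i + 1) r,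
          if rhoC r i k = gammaC r (i + 1) k' then ellC r T ⟨i, hi⟩ (2*r+1-k') else 0) = 0 := by
        apply Finset.sum_eq_zero
        intro k' hk'
        rw [Finset.mem_Icc] at hk'
        rw [gamma_rho' i k' hk'.2 (by omega) hi, if_neg]
        intro heq
        have := rhoC_inj hi hk hkr hi (by omega) (by omega) heq
        omega
      rw [hB, Nat.add_zero]
      rw [Finset.sum_eq_single_of_mem k (Finset.mem_Icc.2 ⟨hk, hk2⟩) ?ne]
      case ne =>
        intro k' hk' hne
        rw [Finset.mem_Icc] at hk'
        rw [beta_rho i k' hk'.2, if_neg]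
        intro heq
        have := rhoC_inj hi hk hkr hi hk'.1 (by omega) heq
        omega
      rw [beta_rho i k hk2, if_pos rfl]
    · have hA : (∑ k' ∈ Finset.Icc (i + 2) r,
          if rhoC r i k = betaC r (i + 1) (k' - 1) then ellC r T ⟨i, hi⟩ k' else 0) = 0 := by
        apply Finset.sum_eq_zero
        intro k' hk'
        rw [Finset.mem_Icc] at hk'
        rw [beta_rho i k' hk'.2, if_neg]
        intro heq
        have := rhoC_inj hi hk hkr hi hk'.1 (by omega) heq
        omega
      rw [hA, Nat.zero_add]
      rw [Finset.sum_eq_single_of_mem (2*r+1-k) (Finset.mem_Icc.2 ⟨by omega, by omega⟩) ?ne]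
      case ne =>
        intro k' hk' hne
        rw [Finset.mem_Icc] at hk'
        rw [gamma_rho' i k' hk'.2 (by omega) hi, if_neg]
        intro heq
        have := rhoC_inj hi hk hkr hi (by omega) (by omega) heq
        omega
      rw [gamma_rho' i (2*r+1-k) (by omega) (by omega) hi,
        show 2*r+1-(2*r+1-k) = k by omega, if_pos rfl]
def ellN (r : ℕ) (T : TabC r) (i x : ℕ) : ℕ :=
  if h : i < r then (T.row ⟨i, h⟩).count x else 0
lemma rhoC_mem_posRoots {r : ℕ} (hr : 2 ≤ r) {i x : ℕ} (h1 : i < r) (h2 : i+2 ≤ x)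
    (h3 : x ≤ 2*r-i) : rhoC r i x ∈ posRootsC r := by
  rw [posRootsC_eq r hr]
  exact Finset.mem_image.2 ⟨(i, x), mem_idxC.2 ⟨h1, h2, h3⟩, rfl⟩

/-- `Ξ` is a bijection from `𝒯(∞)` of type `C_r` onto the set of
all functions from the positive roots of `C_r` to `ℕ`; moreover `seg(T)`
equals the number of positive roots where `Ξ(T)` is nonzero. -/
theorem stmt5 (r : ℕ) (hr : 2 ≤ r) :
    Function.Bijective
      (fun (T : TabC r) (α : {v // v ∈ posRootsC r}) => XiC r T α.1) ∧
    (∀ T : TabC r,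
      segC r T = ((posRootsC r).filter fun v => XiC r T v ≠ 0).card) := by
  constructor
  · constructor
    · intro T T' h
      apply eq_of_counts
      intro i x hx1 hx2
      have hmem := rhoC_mem_posRoots hr i.2 hx1 hx2
      have hXi : XiC r T (rhoC r i.1 x) = XiC r T' (rhoC r i.1 x) :=
        congrFun h ⟨rhoC r i.1 x, hmem⟩
      rw [XiC_rho T i.2 hx1 hx2, XiC_rho T' i.2 hx1 hx2] at hXi
      exact hXi
    · intro g
      refine ⟨mkTab r (fun i x => if h : i < r ∧ i+2 ≤ x ∧ x ≤ 2*r-i then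
        g ⟨rhoC r i x, rhoC_mem_posRoots hr h.1 h.2.1 h.2.2⟩ else 0), ?_⟩
      funext α
      obtain ⟨v, hv⟩ := α
      rw [posRootsC_eq r hr] at hv
      obtain ⟨p, hp, hrho⟩ := Finset.mem_image.1 hv
      rw [mem_idxC] at hp
      subst hrho
      show XiC r _ (rhoC r p.1 p.2) = _
      rw [XiC_rho _ hp.1 hp.2.1 hp.2.2, ellC_mkTab _ ⟨p.1, hp.1⟩ hp.2.1 hp.2.2,
        dif_pos (show p.1 < r ∧ p.1+2 ≤ p.2 ∧ p.2 ≤ 2*r-p.1 from hp)]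
  · intro T
    rw [posRootsC_eq r hr]
    have hfil : ((idxC r).image fun p => rhoC r p.1 p.2).filter (fun v => XiC r T v ≠ 0)
        = ((idxC r).filter fun p => ellN r T p.1 p.2 ≠ 0).image fun p => rhoC r p.1 p.2 := by
      rw [Finset.filter_image]
      apply congrArg (Finset.image fun p : ℕ × ℕ => rhoC r p.1 p.2)
      apply Finset.filter_congr
      intro p hp
      rw [mem_idxC] at hp
      rw [show XiC r T (rhoC r p.1 p.2) = ellC r T ⟨p.1, hp.1⟩ p.2 from
        XiC_rho T hp.1 hp.2.1 hp.2.2, ellN, dif_pos hp.1]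
      rfl
    rw [hfil, Finset.card_image_of_injOn ?inj]
    case inj =>
      intro p hp q hq hpq
      simp only [Finset.coe_filter, Set.mem_setOf_eq, mem_idxC] at hp hq
      have := rhoC_inj hp.1.1 hp.1.2.1 hp.1.2.2 hq.1.1 hq.1.2.1 hq.1.2.2 hpq
      exact Prod.ext this.1 this.2
    rw [idxC, Finset.filter_biUnion, Finset.card_biUnion ?disj]
    case disj =>
      intro a _ b _ hab
      rw [Function.onFun, Finset.disjoint_left]
      intro p hp hq
      simp only [Finset.mem_filter, Finset.mem_image] at hp hq
      obtain ⟨k1, _, hk1⟩ := hp.1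
      obtain ⟨k2, _, hk2⟩ := hq.1
      have ha : p.1 = a := by rw [← hk1]
      have hb : p.1 = b := by rw [← hk2]
      exact hab (by rw [← ha, ← hb])
    rw [segC]
    have hterm : ∀ i : Fin r,
        ((Finset.Icc (i.1 + 2) (2 * r)).filter fun x => ellC r T i x ≠ 0).card
        = ((Finset.Icc (i.1 + 2) (2 * r - i.1)).filter fun x => ellN r T i.1 x ≠ 0).card := by
      intro i
      congr 1
      ext y
      simp only [Finset.mem_filter, Finset.mem_Icc]
      have he : ellN r T i.1 y = ellC r T i y := by rw [ellN, dif_pos i.2]; rfl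
      rw [he]
      constructor
      · rintro ⟨⟨hy1, hy2⟩, hy3⟩
        refine ⟨⟨hy1, ?_⟩, hy3⟩
        by_contra hc
        exact hy3 (count_zero_hi T i (by omega))
      · rintro ⟨⟨hy1, hy2⟩, hy3⟩
        have := i.2
        exact ⟨⟨hy1, by omega⟩, hy3⟩
    rw [Finset.sum_congr rfl (fun i _ => hterm i), Fin.sum_univ_eq_sum_range
      (fun i => ((Finset.Icc (i + 2) (2 * r - i)).filter fun x => ellN r T i x ≠ 0).card)]
    apply Finset.sum_congr rfl
    intro i _
    rw [Finset.filter_image,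
      Finset.card_image_of_injective _ (fun a b h => congrArg Prod.snd h)]
end
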